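/- arXiv:math/0610040 — 4 statements merged into one kernel-verified Lean document; each statement's English description precedes it below -/
import Mathlib

section
/- Suppose conditions (H1) and (H2) hold and that I_T(0,0) > 0 for some (equivalently, every) T > 0. Then for any q ∈ 𝓡 and any open set O ⊂ ℝ^d, lim_{δ→0} liminf_{n→∞} (1/n) log inf_{z ∈ E : |z − nq| < δn} G(z, nO) ≥ − inf_{q' ∈ O} I(q,q'). -/
open MeasureTheory Filter Set Metric
open scoped ENNReal Topology Pointwise

noncomputable section

namespace GreenLDP

/-- The state space `ℝ^d` with its Euclidean norm. -/
abbrev Sp (d : ℕ) := EuclideanSpace ℝ (Fin d)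

/-- Path space: trajectories indexed by (real) time. -/
abbrev Path (d : ℕ) := ℝ → Sp d

variable {d : ℕ}

/-- A path is right continuous with left limits at all nonnegative times. -/
def CadlagOn (φ : Path d) : Prop :=
  ∀ t : ℝ, 0 ≤ t → ContinuousWithinAt φ (Ici t) t ∧
    (0 < t → ∃ L : Sp d, Tendsto φ (𝓝[<] t) (𝓝 L))

/-- Basic setup: a time-homogeneous Markov process `Z` on an unbounded subset
`E ⊆ ℝ^d`, described through the family of its path-space laws `P z`
(the law of the process started at `z ∈ E`), whose sample paths are right
continuous with left limits. -/
structure MarkovSetup (d : ℕ) where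
  /-- the (unbounded) state space `E ⊆ ℝ^d` -/
  E : Set (Sp d)
  /-- `P z` is the law on path space of the process started at `z`;
  `P z S = ℙ_z(Z(·) ∈ S)` -/
  P : Sp d → Measure (Path d)
  prob : ∀ z, IsProbabilityMeasure (P z)
  unbounded : ¬ Bornology.IsBounded E
  start : ∀ z ∈ E, P z {ω | ω 0 = z} = 1
  stays : ∀ z ∈ E, ∀ᵐ ω ∂ P z, ∀ t : ℝ, 0 ≤ t → ω t ∈ E
  cadlag : ∀ z ∈ E, ∀ᵐ ω ∂ P z, CadlagOn ω
  /-- (time-homogeneous) Markov property: conditionally on the position at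
  time `s`, the law of the shifted path is that of the process restarted there. -/
  markov : ∀ z ∈ E, ∀ s : ℝ, 0 ≤ s → ∀ F : Path d → ℝ≥0∞, Measurable F →
    ∫⁻ ω, F (fun t => ω (s + t)) ∂ P z = ∫⁻ ω, ∫⁻ ω', F ω' ∂ P (ω s) ∂ P z

/-- Green's function `G(z,B) = ∫₀^∞ ℙ_z(Z(t) ∈ B) dt`. -/
def green (P : Sp d → Measure (Path d)) (z : Sp d) (B : Set (Sp d)) : ℝ≥0∞ :=
  ∫⁻ t in Ioi (0 : ℝ), P z {ω | ω t ∈ B}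

/-- First exit time `τ_R = inf {t ≥ 0 : |Z(t)| ≥ R}` from the open ball of
radius `R` (equal to `∞` if the process never exits). -/
def exitTime (ω : Path d) (R : ℝ) : ℝ≥0∞ :=
  ⨅ t ∈ {t : ℝ | 0 ≤ t ∧ R ≤ ‖ω t‖}, ENNReal.ofReal t

/-- Truncated Green's function `G_R(z,B) = ∫₀^∞ ℙ_z(Z(t) ∈ B, τ_R > t) dt`. -/
def greenTrunc (P : Sp d → Measure (Path d)) (R : ℝ) (z : Sp d) (B : Set (Sp d)) : ℝ≥0∞ :=
  ∫⁻ t in Ioi (0 : ℝ), P z {ω | ω t ∈ B ∧ ENNReal.ofReal t < exitTime ω R}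

/-- The scaled path `Z^ε(t) = ε Z(t/ε)`. -/
def scaledPath (ε : ℝ) (ω : Path d) : Path d := fun t => ε • ω (t / ε)

/-- The set `{z ∈ E : |εz − q| < δ}` of admissible starting points. -/
def nearScaled (E : Set (Sp d)) (ε : ℝ) (q : Sp d) (δ : ℝ) : Set (Sp d) :=
  {z ∈ E | ‖ε • z - q‖ < δ}

/-- The set `{z ∈ E : |z − nq| < δn}` of admissible starting points. -/
def nearE (E : Set (Sp d)) (q : Sp d) (n δ : ℝ) : Set (Sp d) :=
  {z ∈ E | ‖z - n • q‖ < δ * n}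

/-- Large deviation lower bound for the scaled variables `Z^ε(T) = εZ(T/ε)` over
open sets:  `lim_{δ→0} liminf_{ε→0} ε log inf_{z∈E,|εz−q|<δ} ℙ_z(Z^ε(T) ∈ O)
≥ −inf_{q'∈O} I(q,q')`.  (Since the inner quantity is monotone in `δ`, the limit
as `δ → 0⁺` is the supremum over `δ > 0`.) -/
def LDPLower (E : Set (Sp d)) (P : Sp d → Measure (Path d)) (T : ℝ)
    (I : Sp d → Sp d → EReal) : Prop :=
  ∀ (q : Sp d) (O : Set (Sp d)), IsOpen O →
    -(⨅ q' ∈ O, I q q') ≤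
      ⨆ δ : {δ : ℝ // 0 < δ},
        liminf (fun ε : ℝ =>
          (ε : EReal) * ENNReal.log
            (⨅ z ∈ nearScaled E ε q δ.1, P z {ω | scaledPath ε ω T ∈ O}))
          (𝓝[>] (0 : ℝ))

/-- Large deviation upper bound for the scaled variables `Z^ε(T) = εZ(T/ε)` over
compact sets:  `lim_{δ→0} limsup_{ε→0} ε log sup_{z∈E,|εz−q|<δ} ℙ_z(Z^ε(T) ∈ V)
≤ −inf_{q'∈V} I(q,q')`. -/
def LDPUpperCompact (E : Set (Sp d)) (P : Sp d → Measure (Path d)) (T : ℝ)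
    (I : Sp d → Sp d → EReal) : Prop :=
  ∀ (q : Sp d) (V : Set (Sp d)), IsCompact V →
    (⨅ δ : {δ : ℝ // 0 < δ},
      limsup (fun ε : ℝ =>
        (ε : EReal) * ENNReal.log
          (⨆ z ∈ nearScaled E ε q δ.1, P z {ω | scaledPath ε ω T ∈ V}))
        (𝓝[>] (0 : ℝ)))
      ≤ -(⨅ q' ∈ V, I q q')

/-- Large deviation upper bound over closed sets (for the full LDP). -/
def LDPUpperClosed (E : Set (Sp d)) (P : Sp d → Measure (Path d)) (T : ℝ)
    (I : Sp d → Sp d → EReal) : Prop :=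
  ∀ (q : Sp d) (V : Set (Sp d)), IsClosed V →
    (⨅ δ : {δ : ℝ // 0 < δ},
      limsup (fun ε : ℝ =>
        (ε : EReal) * ENNReal.log
          (⨆ z ∈ nearScaled E ε q δ.1, P z {ω | scaledPath ε ω T ∈ V}))
        (𝓝[>] (0 : ℝ)))
      ≤ -(⨅ q' ∈ V, I q q')

/-- The weak large deviation principle in `ℝ^d` for `Z^ε(T)` with a lower
semicontinuous rate function `I_T : ℝ^d × ℝ^d → [0,∞)`. -/
def WeakLDP (E : Set (Sp d)) (P : Sp d → Measure (Path d)) (T : ℝ)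
    (I : Sp d → Sp d → ℝ) : Prop :=
  LowerSemicontinuous (fun p : Sp d × Sp d => I p.1 p.2) ∧
  (∀ q q' : Sp d, 0 ≤ I q q') ∧
  LDPLower E P T (fun q q' => ((I q q' : ℝ) : EReal)) ∧
  LDPUpperCompact E P T (fun q q' => ((I q q' : ℝ) : EReal))

/-- Hypothesis (H1): for every `T > 0` the scaled variables `Z^ε(T)` satisfy the
weak large deviation principle with rate function `I_T`. -/
def H1 (E : Set (Sp d)) (P : Sp d → Measure (Path d))
    (I : ℝ → Sp d → Sp d → ℝ) : Prop :=
  ∀ T : ℝ, 0 < T → WeakLDP E P T (I T)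

/-- The jump generating function
`φ̂(a) = sup_{z∈E} sup_{t∈[0,1]} 𝔼_z exp(a·(Z(t)−z))` of hypothesis (H2). -/
def mgf (E : Set (Sp d)) (P : Sp d → Measure (Path d)) (a : Sp d) : ℝ≥0∞ :=
  ⨆ z ∈ E, ⨆ t ∈ Icc (0:ℝ) 1,
    ∫⁻ ω, ENNReal.ofReal (Real.exp ((inner ℝ a (ω t - z) : ℝ))) ∂ P z

/-- Hypothesis (H2): `φ̂(a) < ∞` for every `a ∈ ℝ^d`. -/
def H2 (E : Set (Sp d)) (P : Sp d → Measure (Path d)) : Prop :=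
  ∀ a : Sp d, mgf E P a < ⊤

/-- Hypothesis (H3), communication condition with constant `θ > 0` : there is a
positive function `σ` on `E` with `σ(z)/|z| → 0` as `|z| → ∞` such that for all
`z, z' ∈ E` the probability, starting from `z`, of ever hitting the open ball
`B(z', σ(z'))` is at least `exp(−θ|z'−z|)`. -/
def H3 (E : Set (Sp d)) (P : Sp d → Measure (Path d)) (θ : ℝ) : Prop :=
  0 < θ ∧ ∃ σ : Sp d → ℝ, (∀ z ∈ E, 0 < σ z) ∧
    (∀ η : ℝ, 0 < η → ∃ M : ℝ, ∀ z ∈ E, M ≤ ‖z‖ → σ z < η * ‖z‖) ∧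
    ∀ z ∈ E, ∀ z' ∈ E,
      ENNReal.ofReal (Real.exp (-θ * ‖z' - z‖)) ≤
        P z {ω | ∃ t : ℝ, 0 ≤ t ∧ ω t ∈ ball z' (σ z')}

/-- The set `𝓡` of all possible limits `lim_{ε→0} ε z_ε` with `z_ε ∈ E`. -/
def RSet (E : Set (Sp d)) : Set (Sp d) :=
  {q | ∃ zf : ℝ → Sp d, (∀ ε : ℝ, zf ε ∈ E) ∧
    Tendsto (fun ε : ℝ => ε • zf ε) (𝓝[>] (0:ℝ)) (𝓝 q)}

/-- The quasipotential `I(q,q') = inf_{T>0} I_T(q,q')`. -/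
def quasipot (I : ℝ → Sp d → Sp d → ℝ) (q q' : Sp d) : ℝ :=
  ⨅ T : {T : ℝ // 0 < T}, I T.1 q q'

-- `Î(q,q') = I(q,q')` for `q ≠ q'` and `Î(q,q) = 0`.
open Classical in
def quasipotHat (I : ℝ → Sp d → Sp d → ℝ) (q q' : Sp d) : ℝ :=
  if q = q' then 0 else quasipot I q q'

/-- The Skorohod distance on `D([0,T],ℝ^d)` :
`d(φ,ψ) = inf_λ max(sup_{t∈[0,T]}|λ(t)−t|, sup_{t∈[0,T]}|φ(λ(t))−ψ(t)|)`,
the infimum being over increasing bijections `λ` of `[0,T]`. -/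
def skorohodDist (T : ℝ) (φ ψ : Path d) : ℝ :=
  sInf {r : ℝ | 0 ≤ r ∧ ∃ lam : ℝ → ℝ, StrictMonoOn lam (Icc 0 T) ∧
    lam '' Icc 0 T = Icc 0 T ∧
    ∀ t ∈ Icc 0 T, |lam t - t| ≤ r ∧ ‖φ (lam t) - ψ t‖ ≤ r}

/-- The Skorohod topology on paths over the time interval `[0,T]`, generated by
the balls of the Skorohod distance. -/
def skorohodTop (d : ℕ) (T : ℝ) : TopologicalSpace (Path d) :=
  TopologicalSpace.generateFrom
    {s | ∃ (φ : Path d) (r : ℝ), 0 < r ∧ s = {ψ | skorohodDist T φ ψ < r}}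

/-- A good rate function on `D([0,T],ℝ^d)` : for every `c ≥ 0` and every compact
`V ⊆ ℝ^d` the set `{φ : φ(0) ∈ V, I_{[0,T]}(φ) ≤ c}` is compact for the
Skorohod topology. -/
def GoodRate (T : ℝ) (J : Path d → ℝ≥0∞) : Prop :=
  ∀ c : ℝ, 0 ≤ c → ∀ V : Set (Sp d), IsCompact V →
    @IsCompact _ (skorohodTop d T) {φ : Path d | φ 0 ∈ V ∧ J φ ≤ ENNReal.ofReal c}

/-- Sample path large deviation lower bound on `D([0,T],ℝ^d)`. -/
def SPLDLower (E : Set (Sp d)) (P : Sp d → Measure (Path d)) (T : ℝ)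
    (J : Path d → ℝ≥0∞) : Prop :=
  ∀ (z : Sp d) (𝓞 : Set (Path d)), @IsOpen _ (skorohodTop d T) 𝓞 →
    -(⨅ φ ∈ {φ ∈ 𝓞 | φ 0 = z}, (J φ : EReal)) ≤
      ⨆ δ : {δ : ℝ // 0 < δ},
        liminf (fun ε : ℝ =>
          (ε : EReal) * ENNReal.log
            (⨅ z' ∈ nearScaled E ε z δ.1, P z' {ω | scaledPath ε ω ∈ 𝓞}))
          (𝓝[>] (0 : ℝ))

/-- Sample path large deviation upper bound on `D([0,T],ℝ^d)`. -/
def SPLDUpper (E : Set (Sp d)) (P : Sp d → Measure (Path d)) (T : ℝ)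
    (J : Path d → ℝ≥0∞) : Prop :=
  ∀ (z : Sp d) (F : Set (Path d)), @IsClosed _ (skorohodTop d T) F →
    (⨅ δ : {δ : ℝ // 0 < δ},
      limsup (fun ε : ℝ =>
        (ε : EReal) * ENNReal.log
          (⨆ z' ∈ nearScaled E ε z δ.1, P z' {ω | scaledPath ε ω ∈ F}))
        (𝓝[>] (0 : ℝ)))
      ≤ -(⨅ φ ∈ {φ ∈ F | φ 0 = z}, (J φ : EReal))

/-- The sample path large deviation principle on `D([0,T],ℝ^d)` with a good rate
function `J = I_{[0,T]}`. -/
def SPLD (E : Set (Sp d)) (P : Sp d → Measure (Path d)) (T : ℝ)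
    (J : Path d → ℝ≥0∞) : Prop :=
  GoodRate T J ∧ SPLDLower E P T J ∧ SPLDUpper E P T J

/-- Hypothesis (H1'): for every `T > 0` the scaled processes satisfy the sample
path large deviation principle with good rate function `I_{[0,T]} = Ipath T`,
and `I_T(q,q')` is the infimum of `I_{[0,T]}(φ)` over paths with `φ(0) = q`,
`φ(T) = q'`. -/
def H1' (E : Set (Sp d)) (P : Sp d → Measure (Path d))
    (Ipath : ℝ → Path d → ℝ≥0∞) (I : ℝ → Sp d → Sp d → ℝ) : Prop :=
  ∀ T : ℝ, 0 < T → SPLD E P T (Ipath T) ∧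
    ∀ q q' : Sp d,
      (ENNReal.ofReal (I T q q') : ℝ≥0∞) =
        ⨅ φ ∈ {φ : Path d | φ 0 = q ∧ φ T = q'}, Ipath T φ

/-- `lim_{δ→0} liminf_{n→∞} (1/n) log inf_{z∈E,|z−nq|<δn} G(z, nB)`
(the limit in `δ` being a supremum, by monotonicity). -/
def greenLiminf (E : Set (Sp d)) (P : Sp d → Measure (Path d))
    (q : Sp d) (B : Set (Sp d)) : EReal :=
  ⨆ δ : {δ : ℝ // 0 < δ},
    liminf (fun n : ℕ =>
      ((((n : ℝ)⁻¹ : ℝ)) : EReal) * ENNReal.log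
        (⨅ z ∈ nearE E q n δ.1, green P z ((n : ℝ) • B))) atTop

/-- `lim_{δ→0} limsup_{n→∞} (1/n) log sup_{z∈E,|z−nq|<δn} G(z, nB)`
(the limit in `δ` being an infimum, by monotonicity). -/
def greenLimsup (E : Set (Sp d)) (P : Sp d → Measure (Path d))
    (q : Sp d) (B : Set (Sp d)) : EReal :=
  ⨅ δ : {δ : ℝ // 0 < δ},
    limsup (fun n : ℕ =>
      ((((n : ℝ)⁻¹ : ℝ)) : EReal) * ENNReal.log
        (⨆ z ∈ nearE E q n δ.1, green P z ((n : ℝ) • B))) atTop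


namespace Aux

variable {d : ℕ}

/-- Measurability of the evaluation event. -/
lemma measurableSet_eval (u : ℝ) {B : Set (Sp d)} (hB : MeasurableSet B) :
    MeasurableSet {ω : Path d | ω u ∈ B} :=
  (measurable_pi_apply u) hB

/-- Single-direction exponential Chebyshev bound. -/
lemma event_bound (M : MarkovSetup d) {z : Sp d} (hz : z ∈ M.E) {u : ℝ}
    (hu : u ∈ Icc (0:ℝ) 1) (v : Sp d) (ρ : ℝ) :
    M.P z {ω | ρ ≤ (inner ℝ v (ω u - z) : ℝ)} ≤
      ENNReal.ofReal (Real.exp (-ρ)) * mgf M.E M.P v := by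
  set f : Path d → ℝ≥0∞ := fun ω => ENNReal.ofReal (Real.exp ((inner ℝ v (ω u - z) : ℝ))) with hf
  have hmf : Measurable f := by
    apply ENNReal.measurable_ofReal.comp
    apply (Real.continuous_exp.comp
      (continuous_const.inner ((continuous_id.sub continuous_const)))).measurable.comp
    exact measurable_pi_apply u
  have hsub : {ω : Path d | ρ ≤ (inner ℝ v (ω u - z) : ℝ)} ⊆
      {ω | ENNReal.ofReal (Real.exp ρ) ≤ f ω} := by
    intro ω hω
    exact ENNReal.ofReal_le_ofReal (Real.exp_le_exp.2 hω)
  have h1 : ENNReal.ofReal (Real.exp ρ) * M.P z {ω | ENNReal.ofReal (Real.exp ρ) ≤ f ω}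
      ≤ ∫⁻ ω, f ω ∂ M.P z := MeasureTheory.mul_meas_ge_le_lintegral₀ hmf.aemeasurable _
  have hint : ∫⁻ ω, f ω ∂ M.P z ≤ mgf M.E M.P v := by
    refine le_iSup₂_of_le z hz ?_
    exact le_iSup₂_of_le u hu le_rfl
  have hne : ENNReal.ofReal (Real.exp ρ) ≠ 0 := by
    simp [Real.exp_pos ρ, ne_of_gt]
  have hnt : ENNReal.ofReal (Real.exp ρ) ≠ ⊤ := ENNReal.ofReal_ne_top
  calc M.P z {ω | ρ ≤ (inner ℝ v (ω u - z) : ℝ)}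
      ≤ M.P z {ω | ENNReal.ofReal (Real.exp ρ) ≤ f ω} := measure_mono hsub
    _ = (ENNReal.ofReal (Real.exp ρ))⁻¹ *
        (ENNReal.ofReal (Real.exp ρ) * M.P z {ω | ENNReal.ofReal (Real.exp ρ) ≤ f ω}) := by
        rw [← mul_assoc, ENNReal.inv_mul_cancel hne hnt, one_mul]
    _ ≤ (ENNReal.ofReal (Real.exp ρ))⁻¹ * (∫⁻ ω, f ω ∂ M.P z) := by
        exact mul_le_mul_right h1 _
    _ ≤ (ENNReal.ofReal (Real.exp ρ))⁻¹ * mgf M.E M.P v := mul_le_mul_right hint _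
    _ = ENNReal.ofReal (Real.exp (-ρ)) * mgf M.E M.P v := by
        rw [← ENNReal.ofReal_inv_of_pos (Real.exp_pos ρ), Real.exp_neg]

end Aux
namespace Aux2

variable {d : ℕ}

lemma pigeonhole {X : Sp d} {R : ℝ} (hR : 0 < R) (hX : R ≤ ‖X‖) :
    ∃ i : Fin d, (1 + Real.sqrt d)⁻¹ * R ≤ X i ∨ (1 + Real.sqrt d)⁻¹ * R ≤ -(X i) := by
  set c : ℝ := (1 + Real.sqrt d)⁻¹ with hc
  have hsd : 0 ≤ Real.sqrt d := Real.sqrt_nonneg d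
  have hden : (0:ℝ) < 1 + Real.sqrt d := by linarith
  have hcpos : 0 < c := inv_pos.2 hden
  by_contra hcon
  push_neg at hcon
  have habs : ∀ i : Fin d, |X i| ≤ c * R := by
    intro i
    rcases hcon i with ⟨h1, h2⟩
    rw [abs_le]; constructor <;> nlinarith
  have hnorm : ‖X‖ ≤ Real.sqrt d * (c * R) := by
    rw [EuclideanSpace.norm_eq]
    have hsum : (∑ i, ‖X i‖ ^ 2) ≤ ∑ _i : Fin d, (c * R)^2 := by
      apply Finset.sum_le_sum
      intro i _
      have := habs i
      rw [Real.norm_eq_abs]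
      nlinarith [abs_nonneg (X i)]
    calc Real.sqrt (∑ i, ‖X i‖ ^ 2) ≤ Real.sqrt (∑ _i : Fin d, (c * R)^2) :=
          Real.sqrt_le_sqrt hsum
      _ = Real.sqrt (d * (c*R)^2) := by rw [Finset.sum_const, Finset.card_fin]; ring_nf
      _ = Real.sqrt d * (c * R) := by
          rw [Real.sqrt_mul (Nat.cast_nonneg d), Real.sqrt_sq (by positivity)]
  have hlt : Real.sqrt d * (c * R) < R := by
    have hc1 : c * (1 + Real.sqrt d) = 1 := inv_mul_cancel₀ (ne_of_gt hden)
    nlinarith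
  linarith [hX.trans hnorm]

/-- Uniform Chernoff bound from (H2). -/
lemma chernoff (M : MarkovSetup d) (hH2 : H2 M.E M.P) :
    ∃ C : ℝ≥0∞, C ≠ ⊤ ∧ ∃ c : ℝ, 0 < c ∧ ∀ z ∈ M.E, ∀ u ∈ Icc (0:ℝ) 1, ∀ R : ℝ,
      M.P z {ω | R ≤ ‖ω u - z‖} ≤ C * ENNReal.ofReal (Real.exp (-(c * R))) := by
  classical
  set c : ℝ := (1 + Real.sqrt d)⁻¹ with hc
  have hsd : 0 ≤ Real.sqrt d := Real.sqrt_nonneg d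
  have hcpos : 0 < c := inv_pos.2 (by linarith)
  set S : ℝ≥0∞ := ∑ i : Fin d,
    (mgf M.E M.P (EuclideanSpace.single i 1) + mgf M.E M.P (-(EuclideanSpace.single i 1))) with hS
  have hSne : S ≠ ⊤ := by
    rw [hS]
    refine (ENNReal.sum_lt_top.2 ?_).ne
    intro i _
    exact ENNReal.add_lt_top.2 ⟨hH2 _, hH2 _⟩
  refine ⟨1 + S, by simp [ENNReal.add_ne_top, hSne], c, hcpos, ?_⟩
  intro z hz u hu R
  haveI := M.prob z
  rcases le_or_gt R 0 with hR | hR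
  · have h1 : (1:ℝ) ≤ Real.exp (-(c*R)) := by
      rw [Real.one_le_exp_iff]
      nlinarith
    calc M.P z {ω | R ≤ ‖ω u - z‖} ≤ 1 := prob_le_one
      _ = 1 * 1 := (one_mul 1).symm
      _ ≤ (1 + S) * ENNReal.ofReal (Real.exp (-(c * R))) := by
          apply mul_le_mul' le_self_add
          rw [← ENNReal.ofReal_one]
          exact ENNReal.ofReal_le_ofReal h1
  · -- main case
    have hsub : {ω : Path d | R ≤ ‖ω u - z‖} ⊆
        ⋃ i : Fin d, ({ω : Path d | c * R ≤ (inner ℝ (EuclideanSpace.single i (1:ℝ)) (ω u - z) : ℝ)}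
          ∪ {ω : Path d | c * R ≤ (inner ℝ (-(EuclideanSpace.single i (1:ℝ))) (ω u - z) : ℝ)}) := by
      intro ω hω
      obtain ⟨i, hi⟩ := pigeonhole hR hω
      refine Set.mem_iUnion.2 ⟨i, ?_⟩
      have hinner : (inner ℝ (EuclideanSpace.single i (1:ℝ)) (ω u - z) : ℝ) = (ω u - z) i := by
        rw [EuclideanSpace.inner_single_left]; simp
      rcases hi with hi | hi
      · left; simp only [Set.mem_setOf_eq, hinner]; exact hi
      · right; simp only [Set.mem_setOf_eq, inner_neg_left, hinner]; exact hi
    calc M.P z {ω | R ≤ ‖ω u - z‖}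
        ≤ ∑' i : Fin d, M.P z
          ({ω : Path d | c * R ≤ (inner ℝ (EuclideanSpace.single i (1:ℝ)) (ω u - z) : ℝ)}
          ∪ {ω : Path d | c * R ≤ (inner ℝ (-(EuclideanSpace.single i (1:ℝ))) (ω u - z) : ℝ)}) :=
          (measure_mono hsub).trans (measure_iUnion_le _)
      _ ≤ ∑ i : Fin d, (ENNReal.ofReal (Real.exp (-(c*R))) *
            (mgf M.E M.P (EuclideanSpace.single i 1) + mgf M.E M.P (-(EuclideanSpace.single i 1)))) := by
          rw [tsum_fintype]
          apply Finset.sum_le_sum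
          intro i _
          refine (measure_union_le _ _).trans ?_
          rw [mul_add]
          exact add_le_add (Aux.event_bound M hz hu _ _) (Aux.event_bound M hz hu _ _)
      _ = ENNReal.ofReal (Real.exp (-(c*R))) * S := by rw [hS, Finset.mul_sum]
      _ ≤ ENNReal.ofReal (Real.exp (-(c*R))) * (1 + S) := by
          exact mul_le_mul_right le_add_self _
      _ = (1 + S) * ENNReal.ofReal (Real.exp (-(c * R))) := mul_comm _ _

end Aux2
namespace Aux3

variable {d : ℕ}

/-- One-step Markov decoupling bound. -/
lemma markov_step (M : MarkovSetup d) {z : Sp d} (hz : z ∈ M.E) {s u : ℝ}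
    (hs : 0 ≤ s) (hu : 0 ≤ u) {A B : Set (Sp d)}
    (hA : MeasurableSet A) (hB : MeasurableSet B) :
    (⨅ z' ∈ A ∩ M.E, M.P z' {ω | ω u ∈ B}) * M.P z {ω | ω s ∈ A}
      ≤ M.P z {ω | ω (s + u) ∈ B} := by
  classical
  set c : ℝ≥0∞ := ⨅ z' ∈ A ∩ M.E, M.P z' {ω | ω u ∈ B} with hcdef
  set S : Set (Path d) := {ω' | ω' u ∈ B} with hSdef
  have hS : MeasurableSet S := Aux.measurableSet_eval u hB
  set F : Path d → ℝ≥0∞ := S.indicator (fun _ => 1) with hFdef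
  have hF : Measurable F := measurable_const.indicator hS
  have hmark := M.markov z hz s hs F hF
  have hL : ∫⁻ ω, F (fun t => ω (s + t)) ∂ M.P z = M.P z {ω | ω (s + u) ∈ B} := by
    have : (fun ω : Path d => F (fun t => ω (s + t))) =
        ({ω : Path d | ω (s + u) ∈ B}).indicator (fun _ => 1) := by
      funext ω
      simp only [hFdef, Set.indicator_apply, Set.mem_setOf_eq, hSdef]
    rw [this, MeasureTheory.lintegral_indicator_const (Aux.measurableSet_eval (s+u) hB), one_mul]
  have hR : ∫⁻ ω, ({ω : Path d | ω s ∈ A}).indicator (fun _ => c) ω ∂ M.P z ≤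
      ∫⁻ ω, (∫⁻ ω', F ω' ∂ M.P (ω s)) ∂ M.P z := by
    apply MeasureTheory.lintegral_mono_ae
    filter_upwards [M.stays z hz] with ω hω
    by_cases hmem : ω s ∈ A
    · rw [show ({ω : Path d | ω s ∈ A}).indicator (fun _ => c) ω = c by
        simp only [Set.indicator_apply, Set.mem_setOf_eq, if_pos hmem]]
      have hin : ω s ∈ A ∩ M.E := ⟨hmem, hω s hs⟩
      have : ∫⁻ ω', F ω' ∂ M.P (ω s) = M.P (ω s) S := by
        rw [hFdef, MeasureTheory.lintegral_indicator_const hS, one_mul]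
      rw [this]
      exact biInf_le (fun z' => M.P z' {ω | ω u ∈ B}) hin
    · rw [show ({ω : Path d | ω s ∈ A}).indicator (fun _ => c) ω = 0 by
        simp only [Set.indicator_apply, Set.mem_setOf_eq, if_neg hmem]]
      exact zero_le
  have hRc : ∫⁻ ω, ({ω : Path d | ω s ∈ A}).indicator (fun _ => c) ω ∂ M.P z =
      c * M.P z {ω | ω s ∈ A} :=
    MeasureTheory.lintegral_indicator_const (Aux.measurableSet_eval s hA) c
  rw [← hL, hmark, ← hRc] at *
  exact hR

/-- Lower bound on the Green's function by one time slice of length 1. -/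
lemma green_lower (M : MarkovSetup d) {z : Sp d} (hz : z ∈ M.E) {s : ℝ} (hs : 0 ≤ s)
    {A B : Set (Sp d)} (hA : MeasurableSet A) (hB : MeasurableSet B)
    (hin : ∀ u ∈ Icc (0:ℝ) 1,
      (ENNReal.ofReal 2⁻¹) ≤ ⨅ z' ∈ A ∩ M.E, M.P z' {ω | ω u ∈ B}) :
    (ENNReal.ofReal 2⁻¹) * M.P z {ω | ω s ∈ A} ≤ green M.P z B := by
  have key : ∀ t ∈ Ioo s (s+1),
      (ENNReal.ofReal 2⁻¹) * M.P z {ω | ω s ∈ A} ≤ M.P z {ω | ω t ∈ B} := by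
    intro t ht
    have hu : t - s ∈ Icc (0:ℝ) 1 := ⟨by linarith [ht.1], by linarith [ht.2]⟩
    have h1 : (ENNReal.ofReal 2⁻¹) * M.P z {ω | ω s ∈ A} ≤
        (⨅ z' ∈ A ∩ M.E, M.P z' {ω | ω (t-s) ∈ B}) * M.P z {ω | ω s ∈ A} :=
      mul_le_mul_left (hin _ hu) _
    have h2 := markov_step M hz hs hu.1 hA hB
    rw [show s + (t - s) = t by ring] at h2
    exact h1.trans h2
  calc (ENNReal.ofReal 2⁻¹) * M.P z {ω | ω s ∈ A}
      = ∫⁻ _t in Ioo s (s+1), ((ENNReal.ofReal 2⁻¹) * M.P z {ω | ω s ∈ A}) := by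
        rw [MeasureTheory.setLIntegral_const, Real.volume_Ioo,
          show s + 1 - s = 1 by ring, ENNReal.ofReal_one, mul_one]
    _ ≤ ∫⁻ t in Ioo s (s+1), M.P z {ω | ω t ∈ B} := by
        apply MeasureTheory.lintegral_mono_ae
        filter_upwards [MeasureTheory.ae_restrict_mem measurableSet_Ioo] with t ht
        exact key t ht
    _ ≤ ∫⁻ t in Ioi (0:ℝ), M.P z {ω | ω t ∈ B} := by
        apply MeasureTheory.lintegral_mono_set
        intro t ht
        exact lt_of_le_of_lt hs ht.1
    _ = green M.P z B := rfl

end Aux3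
namespace Aux4

variable {d : ℕ}

/-- For large `n`, starting anywhere in `n • ball q' r ∩ E`, the process stays in
`n • ball q' (3r)` at any time `u ∈ [0,1]` with probability at least `1/2`. -/
lemma half_bound (M : MarkovSetup d) (hH2 : H2 M.E M.P) {r : ℝ} (hr : 0 < r) (q' : Sp d) :
    ∀ᶠ n : ℕ in atTop, ∀ z' ∈ ((n:ℝ) • ball q' r) ∩ M.E, ∀ u ∈ Icc (0:ℝ) 1,
      ENNReal.ofReal 2⁻¹ ≤ M.P z' {ω | ω u ∈ (n:ℝ) • (ball q' (3*r))} := by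
  obtain ⟨C, hC, c, hc, hcher⟩ := Aux2.chernoff M hH2
  have htend : Tendsto (fun n : ℕ => C * ENNReal.ofReal (Real.exp (-(c * (2*r*(n:ℝ))))))
      atTop (𝓝 0) := by
    have h1 : Tendsto (fun n : ℕ => -(c * (2*r*(n:ℝ)))) atTop atBot := by
      have hb := (tendsto_natCast_atTop_atTop (R := ℝ)).const_mul_atTop
        (by positivity : (0:ℝ) < c * (2*r))
      exact (tendsto_neg_atTop_atBot.comp hb).congr (fun n => by simp [Function.comp]; ring_nf)
    have h2 : Tendsto (fun n : ℕ => ENNReal.ofReal (Real.exp (-(c * (2*r*(n:ℝ))))))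
        atTop (𝓝 0) := by
      rw [show (0:ℝ≥0∞) = ENNReal.ofReal 0 by simp]
      exact (ENNReal.continuous_ofReal.tendsto 0).comp (Real.tendsto_exp_atBot.comp h1)
    simpa using ENNReal.Tendsto.const_mul h2 (Or.inr hC)
  have hev : ∀ᶠ n : ℕ in atTop,
      C * ENNReal.ofReal (Real.exp (-(c * (2*r*(n:ℝ))))) < ENNReal.ofReal 2⁻¹ :=
    htend.eventually_lt_const (by simp)
  filter_upwards [hev, eventually_ge_atTop 1] with n hn hn1
  intro z' hz' u hu
  haveI := M.prob z'
  have hnR : (0:ℝ) < n := by exact_mod_cast hn1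
  -- geometric inclusion
  have hgeo : {ω : Path d | ‖ω u - z'‖ < 2*r*n} ⊆ {ω : Path d | ω u ∈ (n:ℝ) • ball q' (3*r)} := by
    obtain ⟨⟨p, hp, hpz⟩, _hzE⟩ := hz'
    intro ω hω
    simp only [Set.mem_setOf_eq] at hω ⊢
    rw [Set.mem_smul_set_iff_inv_smul_mem₀ (ne_of_gt hnR)]
    have h1 : ‖(n:ℝ)⁻¹ • ω u - q'‖ < 3*r := by
      have : (n:ℝ)⁻¹ • ω u - q' = (n:ℝ)⁻¹ • (ω u - z') + (p - q') := by
        rw [← hpz]; rw [smul_sub, inv_smul_smul₀ (ne_of_gt hnR)]; abel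
      rw [this]
      calc ‖(n:ℝ)⁻¹ • (ω u - z') + (p - q')‖ ≤ ‖(n:ℝ)⁻¹ • (ω u - z')‖ + ‖p - q'‖ :=
            norm_add_le _ _
        _ < (n:ℝ)⁻¹ * (2*r*n) + r := by
            apply add_lt_add_of_le_of_lt
            · rw [norm_smul, Real.norm_eq_abs, abs_of_pos (inv_pos.2 hnR)]
              exact mul_le_mul_of_nonneg_left hω.le (inv_pos.2 hnR).le
            · exact mem_ball_iff_norm.1 hp
        _ = 2*r + r := by field_simp
        _ ≤ 3*r := le_of_eq (by ring)
    exact mem_ball_iff_norm.2 h1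
  -- complement bound
  have hcompl : M.P z' {ω | 2*r*(n:ℝ) ≤ ‖ω u - z'‖} ≤ ENNReal.ofReal 2⁻¹ :=
    ((hcher z' hz'.2 u hu (2*r*n)).trans hn.le)
  have hcover : (1:ℝ≥0∞) ≤ M.P z' {ω : Path d | ‖ω u - z'‖ < 2*r*n}
      + M.P z' {ω | 2*r*(n:ℝ) ≤ ‖ω u - z'‖} := by
    have huniv : (Set.univ : Set (Path d)) ⊆
        {ω : Path d | ‖ω u - z'‖ < 2*r*n} ∪ {ω | 2*r*(n:ℝ) ≤ ‖ω u - z'‖} := by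
      intro ω _
      rcases lt_or_ge (‖ω u - z'‖) (2*r*n) with h | h
      · exact Or.inl h
      · exact Or.inr h
    calc (1:ℝ≥0∞) = M.P z' Set.univ := (measure_univ).symm
      _ ≤ _ := (measure_mono huniv).trans (measure_union_le _ _)
  have hhalf : ENNReal.ofReal 2⁻¹ ≤ M.P z' {ω : Path d | ‖ω u - z'‖ < 2*r*n} := by
    have h2 : (1:ℝ≥0∞) - ENNReal.ofReal 2⁻¹ ≤ M.P z' {ω : Path d | ‖ω u - z'‖ < 2*r*n} := by
      apply tsub_le_iff_right.2
      exact hcover.trans (add_le_add_right hcompl _)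
    have h3 : (1:ℝ≥0∞) - ENNReal.ofReal 2⁻¹ = ENNReal.ofReal 2⁻¹ := by
      rw [show ENNReal.ofReal 2⁻¹ = (2:ℝ≥0∞)⁻¹ by
        rw [← ENNReal.ofReal_ofNat 2, ← ENNReal.ofReal_inv_of_pos two_pos]]
      rw [← ENNReal.inv_two_add_inv_two, ENNReal.add_sub_cancel_left (by simp)]
    rw [← h3]; exact h2
  exact hhalf.trans (measure_mono hgeo)

end Aux4
namespace Aux5

lemma ereal_neg_mono {a b : EReal} (h : a ≤ b) : -b ≤ -a := by
  apply EReal.neg_le.mpr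
  rw [neg_neg]
  exact h

lemma liminf_map_eq {α β : Type*} (u : β → EReal) (v : α → β) (F : Filter α) :
    Filter.liminf u (Filter.map v F) = Filter.liminf (u ∘ v) F := by
  rw [Filter.liminf, Filter.liminf, Filter.map_map]

lemma tendsto_nat_inv_nhdsGT :
    Tendsto (fun n : ℕ => ((n:ℝ))⁻¹) atTop (𝓝[>] (0:ℝ)) := by
  rw [tendsto_nhdsWithin_iff]
  constructor
  · exact tendsto_inv_atTop_zero.comp tendsto_natCast_atTop_atTop
  · filter_upwards [eventually_ge_atTop 1] with n hn
    have : (0:ℝ) < n := by exact_mod_cast hn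
    exact inv_pos.2 this

/-- Comparison of the exponential-rate liminfs when `G ≥ p/2`. -/
lemma liminf_aux (p G : ℕ → ℝ≥0∞)
    (h : ∀ᶠ n in atTop, p n ≤ 1 ∧ ENNReal.ofReal 2⁻¹ * p n ≤ G n) :
    liminf (fun n : ℕ => (((n : ℝ)⁻¹ : ℝ) : EReal) * ENNReal.log (p n)) atTop ≤
    liminf (fun n : ℕ => (((n : ℝ)⁻¹ : ℝ) : EReal) * ENNReal.log (G n)) atTop := by
  by_contra hcon
  push_neg at hcon
  obtain ⟨m, hm1, hm2⟩ := EReal.exists_between_coe_real hcon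
  obtain ⟨m', hm'1, hm'2⟩ := EReal.exists_between_coe_real hm2
  have hmm' : m < m' := EReal.coe_lt_coe_iff.1 hm'1
  have hev1 : ∀ᶠ n : ℕ in atTop,
      (m' : EReal) < (((n : ℝ)⁻¹ : ℝ) : EReal) * ENNReal.log (p n) :=
    eventually_lt_of_lt_liminf hm'2
  have hev2 : ∀ᶠ n : ℕ in atTop, ((n:ℝ))⁻¹ * (-Real.log 2⁻¹) < m' - m := by
    have ht : Tendsto (fun n : ℕ => ((n:ℝ))⁻¹ * (-Real.log 2⁻¹)) atTop (𝓝 0) := by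
      simpa using (tendsto_inv_atTop_zero.comp
        (tendsto_natCast_atTop_atTop (R := ℝ))).mul_const (-Real.log 2⁻¹)
    exact ht.eventually_lt_const (by linarith)
  have key : ∀ᶠ n : ℕ in atTop,
      (m : EReal) ≤ (((n : ℝ)⁻¹ : ℝ) : EReal) * ENNReal.log (G n) := by
    filter_upwards [h, hev1, hev2, eventually_ge_atTop 1] with n ⟨hp1, hpG⟩ ha hl hn1
    have hnpos : (0:ℝ) < (n:ℝ) := by exact_mod_cast hn1
    have hinv : (0:ℝ) < ((n:ℝ))⁻¹ := inv_pos.2 hnpos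
    -- p n ≠ 0
    have hpne : p n ≠ 0 := by
      intro h0
      rw [h0, ENNReal.log_zero] at ha
      rw [show ((((n : ℝ)⁻¹ : ℝ)) : EReal) * ⊥ = ⊥ from
        EReal.mul_bot_of_pos (EReal.coe_pos.2 hinv)] at ha
      exact (not_lt_bot ha)
    have hpnt : p n ≠ ⊤ := (lt_of_le_of_lt hp1 ENNReal.one_lt_top).ne
    set L : ℝ := Real.log ((p n).toReal) with hL
    have hlog : ENNReal.log (p n) = (L : EReal) := ENNReal.log_pos_real hpne hpnt
    have ham : m' < ((n:ℝ))⁻¹ * L := by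
      rw [hlog, ← EReal.coe_mul] at ha
      exact_mod_cast ha
    have hGlog : ((-Real.log 2⁻¹ * -1 + L : ℝ) : EReal) ≤ ENNReal.log (G n) := by
      have h1 : ENNReal.log (ENNReal.ofReal 2⁻¹ * p n) ≤ ENNReal.log (G n) :=
        ENNReal.log_monotone hpG
      rw [ENNReal.log_mul_add, hlog,
        ENNReal.log_ofReal_of_pos (by norm_num : (0:ℝ) < 2⁻¹)] at h1
      rw [show (-Real.log 2⁻¹ * -1 + L : ℝ) = Real.log 2⁻¹ + L by ring, EReal.coe_add]
      exact h1
    have hfin : ((((n:ℝ)⁻¹ * (-Real.log 2⁻¹ * -1 + L) : ℝ)) : EReal) ≤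
        (((n : ℝ)⁻¹ : ℝ) : EReal) * ENNReal.log (G n) := by
      rw [EReal.coe_mul]
      exact mul_le_mul_of_nonneg_left hGlog (EReal.coe_nonneg.2 hinv.le)
    refine le_trans ?_ hfin
    apply EReal.coe_le_coe_iff.2
    nlinarith
  have : (m : EReal) ≤ liminf (fun n : ℕ => (((n : ℝ)⁻¹ : ℝ) : EReal) * ENNReal.log (G n)) atTop :=
    le_liminf_of_le (by isBoundedDefault) key
  exact absurd (lt_of_le_of_lt this hm1) (lt_irrefl _)

end Aux5
namespace Aux6

variable {d : ℕ}

lemma near_iff (q : Sp d) {n : ℝ} (hnpos : 0 < n) (z : Sp d) (δv : ℝ) :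
    ‖n⁻¹ • z - q‖ < δv ↔ ‖z - n • q‖ < δv * n := by
  have hsm : n⁻¹ • (z - n • q) = n⁻¹ • z - q := by
    rw [smul_sub, smul_smul, inv_mul_cancel₀ hnpos.ne', one_smul]
  have hnorm : ‖n⁻¹ • z - q‖ = n⁻¹ * ‖z - n • q‖ := by
    rw [← hsm, norm_smul, Real.norm_eq_abs, abs_of_pos (inv_pos.2 hnpos)]
  rw [hnorm]
  have hinv : n⁻¹ * n = 1 := inv_mul_cancel₀ hnpos.ne'
  constructor
  · intro h; nlinarith [norm_nonneg (z - n • q)]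
  · intro h; nlinarith [norm_nonneg (z - n • q), inv_pos.2 hnpos]

lemma main_step (M : MarkovSetup d) (I : ℝ → Sp d → Sp d → ℝ)
    (hH1 : H1 M.E M.P I) (hH2 : H2 M.E M.P)
    {q : Sp d} (hq : q ∈ RSet M.E) {O : Set (Sp d)} (hO : IsOpen O)
    {T : ℝ} (hT : 0 < T) {q' : Sp d} (hq' : q' ∈ O) :
    -((I T q q' : ℝ) : EReal) ≤ greenLiminf M.E M.P q O := by
  obtain ⟨ρ, hρ, hball⟩ := Metric.isOpen_iff.1 hO q' hq'
  set r : ℝ := ρ/3 with hrdef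
  have hr : 0 < r := by positivity
  have hball3 : ball q' (3*r) ⊆ O := by
    rw [hrdef, show 3*(ρ/3) = ρ by ring]; exact hball
  have hLDP := (hH1 T hT).2.2.1 q (ball q' r) isOpen_ball
  have h0 : -((I T q q' : ℝ) : EReal) ≤ -(⨅ p ∈ ball q' r, ((I T q p : ℝ) : EReal)) :=
    Aux5.ereal_neg_mono (iInf₂_le q' (mem_ball_self hr))
  refine h0.trans (hLDP.trans ?_)
  apply iSup_le
  intro δ
  refine le_iSup_of_le (f := fun δ : {δ : ℝ // 0 < δ} =>
    liminf (fun n : ℕ => ((((n : ℝ)⁻¹ : ℝ)) : EReal) * ENNReal.log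
      (⨅ z ∈ nearE M.E q n δ.1, green M.P z ((n : ℝ) • O))) atTop) δ ?_
  set δv : ℝ := δ.1 with hδv
  have hδpos : 0 < δv := δ.2
  -- step 1: pass to the sequence 1/n
  have hstep1 : liminf (fun ε : ℝ => (ε : EReal) * ENNReal.log
        (⨅ z ∈ nearScaled M.E ε q δv, M.P z {ω | scaledPath ε ω T ∈ ball q' r})) (𝓝[>] (0:ℝ))
      ≤ liminf (fun n : ℕ => ((((n:ℝ)⁻¹ : ℝ)) : EReal) * ENNReal.log
        (⨅ z ∈ nearScaled M.E ((n:ℝ)⁻¹) q δv, M.P z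
          {ω | scaledPath ((n:ℝ)⁻¹) ω T ∈ ball q' r})) atTop := by
    have hle : Filter.map (fun n : ℕ => ((n:ℝ))⁻¹) atTop ≤ 𝓝[>] (0:ℝ) :=
      Aux5.tendsto_nat_inv_nhdsGT
    exact (liminf_le_liminf_of_le hle (by isBoundedDefault)
      (by isBoundedDefault)).trans_eq (Aux5.liminf_map_eq _ _ _)
  -- step 2: rewrite along the sequence
  have hstep2 : (fun n : ℕ => ((((n:ℝ)⁻¹ : ℝ)) : EReal) * ENNReal.log
        (⨅ z ∈ nearScaled M.E ((n:ℝ)⁻¹) q δv, M.P z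
          {ω | scaledPath ((n:ℝ)⁻¹) ω T ∈ ball q' r}))
      =ᶠ[atTop] (fun n : ℕ => ((((n:ℝ)⁻¹ : ℝ)) : EReal) * ENNReal.log
        (⨅ z ∈ nearE M.E q n δv, M.P z {ω | ω (T * n) ∈ (n:ℝ) • ball q' r})) := by
    filter_upwards [eventually_ge_atTop 1] with n hn
    have hnpos : (0:ℝ) < n := by exact_mod_cast hn
    have hsets : nearScaled M.E ((n:ℝ)⁻¹) q δv = nearE M.E q n δv := by
      ext z
      simp only [nearScaled, nearE, Set.mem_setOf_eq]
      exact and_congr_right (fun _ => near_iff q hnpos z δv)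
    have hevent : ∀ z : Sp d, M.P z {ω | scaledPath ((n:ℝ)⁻¹) ω T ∈ ball q' r} =
        M.P z {ω | ω (T * n) ∈ (n:ℝ) • ball q' r} := by
      intro z
      congr 1
      ext ω
      simp only [Set.mem_setOf_eq, scaledPath]
      rw [Set.mem_smul_set_iff_inv_smul_mem₀ hnpos.ne', div_inv_eq_mul]
    rw [hsets]
    simp only [hevent]
  -- step 3: compare with Green's function liminf
  have hstep3 : liminf (fun n : ℕ => ((((n:ℝ)⁻¹ : ℝ)) : EReal) * ENNReal.log
        (⨅ z ∈ nearE M.E q n δv, M.P z {ω | ω (T * n) ∈ (n:ℝ) • ball q' r})) atTop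
      ≤ liminf (fun n : ℕ => ((((n : ℝ)⁻¹ : ℝ)) : EReal) * ENNReal.log
        (⨅ z ∈ nearE M.E q n δv, green M.P z ((n : ℝ) • O))) atTop := by
    apply Aux5.liminf_aux
    -- eventual nonemptiness of nearE
    obtain ⟨zf, hzfE, hzft⟩ := hq
    have htend : Tendsto (fun n : ℕ => ((n:ℝ))⁻¹ • zf (((n:ℝ))⁻¹)) atTop (𝓝 q) :=
      hzft.comp Aux5.tendsto_nat_inv_nhdsGT
    have hnonempty : ∀ᶠ n : ℕ in atTop, zf (((n:ℝ))⁻¹) ∈ nearE M.E q n δv := by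
      filter_upwards [Metric.tendsto_nhds.1 htend δv hδpos, eventually_ge_atTop 1] with n hd hn
      have hnpos : (0:ℝ) < n := by exact_mod_cast hn
      refine ⟨hzfE _, ?_⟩
      rw [← near_iff q hnpos _ δv]
      rw [dist_eq_norm] at hd
      exact hd
    filter_upwards [hnonempty, Aux4.half_bound M hH2 hr q', eventually_ge_atTop 1]
      with n hne hhb hn
    have hnpos : (0:ℝ) < n := by exact_mod_cast hn
    constructor
    · refine le_trans (iInf₂_le _ hne) ?_
      haveI := M.prob (zf (((n:ℝ))⁻¹))
      exact prob_le_one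
    · refine le_iInf₂ ?_
      intro z hz
      have hzE : z ∈ M.E := hz.1
      have hA : MeasurableSet ((n:ℝ) • ball q' r : Set (Sp d)) :=
        (isOpen_ball.smul₀ hnpos.ne').measurableSet
      have hB : MeasurableSet ((n:ℝ) • O : Set (Sp d)) :=
        (hO.smul₀ hnpos.ne').measurableSet
      have hin : ∀ u ∈ Icc (0:ℝ) 1, (ENNReal.ofReal 2⁻¹) ≤
          ⨅ z' ∈ ((n:ℝ) • ball q' r : Set (Sp d)) ∩ M.E,
            M.P z' {ω | ω u ∈ (n:ℝ) • O} := by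
        intro u hu
        refine le_iInf₂ ?_
        intro z' hz'
        refine (hhb z' hz' u hu).trans (measure_mono ?_)
        intro ω hω
        exact Set.smul_set_mono hball3 hω
      have hgl := Aux3.green_lower M hzE
        (show (0:ℝ) ≤ T * n by positivity) hA hB hin
      refine le_trans (mul_le_mul_right (iInf₂_le z hz) _) hgl
  exact hstep1.trans ((liminf_congr hstep2).le.trans hstep3)

end Aux6
/-- Under (H1), (H2) and `I_T(0,0) > 0`, for every `q ∈ 𝓡` and
every open `O ⊆ ℝ^d`,
`lim_{δ→0} liminf_{n→∞} (1/n) log inf_{z∈E, |z−nq|<δn} G(z,nO) ≥ −inf_{q'∈O} I(q,q')`. -/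
theorem green_weak_ldp_lower
    {d : ℕ} (M : MarkovSetup d) (I : ℝ → Sp d → Sp d → ℝ)
    (hGfin : ∀ z ∈ M.E, ∀ B : Set (Sp d), IsCompact B → green M.P z B < ⊤)
    (hH1 : H1 M.E M.P I) (hH2 : H2 M.E M.P)
    (hI0 : ∃ T : ℝ, 0 < T ∧ 0 < I T 0 0) :
    ∀ q ∈ RSet M.E, ∀ O : Set (Sp d), IsOpen O →
      -(⨅ q' ∈ O, ((quasipot I q q' : ℝ) : EReal)) ≤ greenLiminf M.E M.P q O := by
  intro q hq O hO
  have key : ∀ T : ℝ, 0 < T → ∀ q'' ∈ O,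
      -((I T q q'' : ℝ) : EReal) ≤ greenLiminf M.E M.P q O :=
    fun T hT q'' hq'' => Aux6.main_step M I hH1 hH2 hq hO hT hq''
  rw [EReal.neg_le]
  refine le_iInf₂ ?_
  intro q'' hq''
  set G := greenLiminf M.E M.P q O with hG
  have key' : ∀ T : {T : ℝ // 0 < T}, -G ≤ ((I T.1 q q'' : ℝ) : EReal) :=
    fun T => EReal.neg_le.1 (key T.1 T.2 q'' hq'')
  haveI : Nonempty {T : ℝ // 0 < T} := ⟨⟨1, one_pos⟩⟩
  by_cases hb : -G = ⊥
  · rw [hb]; exact bot_le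
  by_cases ht : -G = ⊤
  · exact absurd (ht ▸ key' ⟨1, one_pos⟩) (EReal.coe_lt_top _).not_ge
  rw [← EReal.coe_toReal ht hb]
  apply EReal.coe_le_coe_iff.2
  apply le_ciInf
  intro T
  have := key' T
  rw [← EReal.coe_toReal ht hb] at this
  exact EReal.coe_le_coe_iff.1 this

end GreenLDP
end
end

section
/- Suppose conditions (H1), (H2) and (H1') hold and that I_T(0,0) > 0. Then for any bounded set V ⊂ ℝ^d, any q ∈ 𝓡 and any A > 0, there exists R > 0 such that lim_{δ→0} limsup_{n→∞} (1/n) log sup_{z ∈ E : |z − nq| < δn} (G(z, nV) − G_{nR}(z, nV)) ≤ −A. -/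
open MeasureTheory Filter Set Metric
open scoped ENNReal Topology Pointwise

noncomputable section

namespace GreenLDP

variable {d : ℕ}

/-! ### Auxiliary lemmas for the proof -/

section Aux

variable {d : ℕ}

lemma le_ofReal_exp_of_mul_log_lt {x : ℝ≥0∞} {ε c : ℝ} (hε : 0 < ε)
    (h : (ε : EReal) * ENNReal.log x < (c : EReal)) :
    x ≤ ENNReal.ofReal (Real.exp (c / ε)) := by
  rcases ENNReal.trichotomy x with h0 | htop | hreal
  · simp [h0]
  · rw [htop, ENNReal.log_top, EReal.mul_top_of_pos (by exact_mod_cast hε)] at h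
    exact absurd h (by simp)
  · have hx0 : x ≠ 0 := by
      intro h'; rw [h'] at hreal; simp at hreal
    have hxt : x ≠ ⊤ := by
      intro h'; rw [h'] at hreal; simp at hreal
    rw [ENNReal.log_pos_real hx0 hxt, ← EReal.coe_mul, EReal.coe_lt_coe_iff] at h
    have hlog : Real.log x.toReal < c / ε := (lt_div_iff₀' hε).mpr h
    have hxR : x.toReal < Real.exp (c / ε) := by
      calc x.toReal = Real.exp (Real.log x.toReal) := (Real.exp_log hreal).symm
        _ < Real.exp (c / ε) := Real.exp_lt_exp.mpr hlog
    calc x = ENNReal.ofReal x.toReal := (ENNReal.ofReal_toReal hxt).symm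
      _ ≤ ENNReal.ofReal (Real.exp (c / ε)) := ENNReal.ofReal_le_ofReal hxR.le

lemma mul_log_le_of_le_ofReal_exp {x : ℝ≥0∞} {ε y : ℝ} (hε : 0 < ε)
    (h : x ≤ ENNReal.ofReal (Real.exp y)) :
    (ε : EReal) * ENNReal.log x ≤ ((ε * y : ℝ) : EReal) := by
  have hlog : ENNReal.log x ≤ (y : EReal) := by
    calc ENNReal.log x ≤ ENNReal.log (ENNReal.ofReal (Real.exp y)) := ENNReal.log_monotone h
      _ = (y : EReal) := by rw [ENNReal.log_ofReal_of_pos (Real.exp_pos y), Real.log_exp]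
  rcases ENNReal.trichotomy x with h0 | htop | hreal
  · rw [h0, ENNReal.log_zero, EReal.mul_bot_of_pos (by exact_mod_cast hε)]
    exact bot_le
  · rw [htop, ENNReal.log_top] at hlog
    exact absurd hlog (by simp)
  · rw [ENNReal.log_pos_real' hreal] at hlog ⊢
    rw [← EReal.coe_mul, EReal.coe_le_coe_iff]
    exact mul_le_mul_of_nonneg_left (EReal.coe_le_coe_iff.mp hlog) hε.le

lemma exists_eventually_of_iInf_limsup_le {g : {δ : ℝ // 0 < δ} → ℝ → EReal} {c c' : ℝ}
    (hcc : c' < c)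
    (h : (⨅ δ : {δ : ℝ // 0 < δ}, limsup (g δ) (𝓝[>] (0 : ℝ))) ≤ ((-c : ℝ) : EReal)) :
    ∃ δ : {δ : ℝ // 0 < δ}, ∃ ε₀ : ℝ, 0 < ε₀ ∧
      ∀ ε : ℝ, 0 < ε → ε < ε₀ → g δ ε < ((-c' : ℝ) : EReal) := by
  have h2 : (⨅ δ : {δ : ℝ // 0 < δ}, limsup (g δ) (𝓝[>] (0 : ℝ))) < ((-c' : ℝ) : EReal) :=
    lt_of_le_of_lt h (by exact_mod_cast neg_lt_neg hcc)
  obtain ⟨δ₀, hδ₀⟩ := iInf_lt_iff.mp h2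
  have hev : ∀ᶠ ε in 𝓝[>] (0 : ℝ), g δ₀ ε < ((-c' : ℝ) : EReal) :=
    eventually_lt_of_limsup_lt hδ₀
  obtain ⟨u, hu, hsub⟩ := mem_nhdsGT_iff_exists_Ioo_subset.mp hev
  exact ⟨δ₀, u, hu, fun ε hε hεu => hsub ⟨hε, hεu⟩⟩

lemma CadlagOn.exists_bound {φ : Path d} (h : CadlagOn φ) (b : ℝ) :
    ∃ C : ℝ, ∀ s ∈ Icc (0 : ℝ) b, ‖φ s‖ ≤ C := by
  have key : ∀ t : ℝ, ∃ U : Set ℝ, U ∈ 𝓝 t ∧ ∃ Ct : ℝ,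
      ∀ s ∈ U ∩ Icc (0 : ℝ) b, ‖φ s‖ ≤ Ct := by
    intro t
    by_cases ht : t ∈ Icc (0 : ℝ) b
    · obtain ⟨hr, hl⟩ := h t ht.1
      have hr' : ∀ᶠ s in 𝓝 t, s ∈ Ici t → ‖φ s‖ ≤ ‖φ t‖ + 1 := by
        rw [← eventually_nhdsWithin_iff]
        filter_upwards [hr (Metric.ball_mem_nhds (φ t) one_pos)] with s hs
        have hs' : ‖φ s - φ t‖ < 1 := by rwa [Set.mem_preimage, Metric.mem_ball, dist_eq_norm] at hs
        calc ‖φ s‖ = ‖φ s - φ t + φ t‖ := by congr 1; abel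
          _ ≤ ‖φ s - φ t‖ + ‖φ t‖ := norm_add_le _ _
          _ ≤ ‖φ t‖ + 1 := by linarith
      by_cases htpos : 0 < t
      · obtain ⟨L, hL⟩ := hl htpos
        have hl' : ∀ᶠ s in 𝓝 t, s ∈ Iio t → ‖φ s‖ ≤ ‖L‖ + 1 := by
          rw [← eventually_nhdsWithin_iff]
          filter_upwards [hL (Metric.ball_mem_nhds L one_pos)] with s hs
          have hs' : ‖φ s - L‖ < 1 := by rwa [Set.mem_preimage, Metric.mem_ball, dist_eq_norm] at hs
          calc ‖φ s‖ = ‖φ s - L + L‖ := by congr 1; abel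
            _ ≤ ‖φ s - L‖ + ‖L‖ := norm_add_le _ _
            _ ≤ ‖L‖ + 1 := by linarith
        refine ⟨{s | (s ∈ Ici t → ‖φ s‖ ≤ ‖φ t‖ + 1) ∧ (s ∈ Iio t → ‖φ s‖ ≤ ‖L‖ + 1)},
          hr'.and hl', max (‖φ t‖ + 1) (‖L‖ + 1), ?_⟩
        rintro s ⟨⟨h1, h2⟩, -⟩
        rcases le_or_gt t s with hts | hst
        · exact le_trans (h1 hts) (le_max_left _ _)
        · exact le_trans (h2 hst) (le_max_right _ _)
      · have ht0 : t = 0 := le_antisymm (not_lt.mp htpos) ht.1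
        refine ⟨{s | s ∈ Ici t → ‖φ s‖ ≤ ‖φ t‖ + 1}, hr', ‖φ t‖ + 1, ?_⟩
        rintro s ⟨h1, hs2⟩
        exact h1 (by rw [ht0]; exact hs2.1)
    · exact ⟨(Icc (0:ℝ) b)ᶜ, (isClosed_Icc.isOpen_compl).mem_nhds ht, 0,
        fun s hs => absurd hs.2 hs.1⟩
  choose U hU C hC using key
  obtain ⟨t₀, -, hcov⟩ :=
    (isCompact_Icc : IsCompact (Icc (0:ℝ) b)).elim_nhds_subcover U (fun x _ => hU x)
  refine ⟨∑ x ∈ t₀, max (C x) 0, fun s hs => ?_⟩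
  obtain ⟨x, hx, hsx⟩ := Set.mem_iUnion₂.mp (hcov hs)
  calc ‖φ s‖ ≤ C x := hC x s ⟨hsx, hs⟩
    _ ≤ max (C x) 0 := le_max_left _ _
    _ ≤ ∑ x ∈ t₀, max (C x) 0 :=
        Finset.single_le_sum (f := fun i => max (C i) 0) (fun i _ => le_max_right _ _) hx

/-- Lower bound on the Skorohod distance to the zero path. -/
lemma le_skorohodDist_zero {T R : ℝ} {ψ : Path d} {C : ℝ}
    (hC : ∀ t ∈ Icc (0 : ℝ) T, ‖ψ t‖ ≤ C)
    {s : ℝ} (hs : s ∈ Icc (0 : ℝ) T) (hR : R ≤ ‖ψ s‖) :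
    R ≤ skorohodDist T (fun _ => 0) ψ := by
  apply le_csInf
  · refine ⟨max C 0, le_max_right _ _, id, strictMonoOn_id, Set.image_id _, fun t ht => ?_⟩
    constructor
    · simp
    · calc ‖(fun _ => (0 : Sp d)) (id t) - ψ t‖ = ‖ψ t‖ := by simp
        _ ≤ C := hC t ht
        _ ≤ max C 0 := le_max_left _ _
  · rintro r ⟨hr0, lam, hlam, hlamim, hcond⟩
    have h2 := (hcond s hs).2
    have h3 : ‖ψ s‖ ≤ r := by
      calc ‖ψ s‖ = ‖(fun _ => (0 : Sp d)) (lam s) - ψ s‖ := by simp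
        _ ≤ r := h2
    linarith

lemma isOpen_skorohodBall {T r : ℝ} (hr : 0 < r) (φ : Path d) :
    IsOpen[skorohodTop d T] {ψ | skorohodDist T φ ψ < r} :=
  TopologicalSpace.isOpen_generateFrom_of_mem ⟨φ, r, hr, rfl⟩

lemma isClosed_skorohodCoBall {T R : ℝ} (hR : 0 < R) (φ : Path d) :
    IsClosed[skorohodTop d T] {ψ | R ≤ skorohodDist T φ ψ} := by
  letI := skorohodTop d T
  rw [← isOpen_compl_iff]
  have : {ψ : Path d | R ≤ skorohodDist T φ ψ}ᶜ = {ψ | skorohodDist T φ ψ < R} := by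
    ext ψ; simp [not_le]
  rw [this]
  exact isOpen_skorohodBall hR φ

/-- From goodness of the rate function: finite-rate paths started at `q` stay in a
Skorohod ball around the zero path. -/
lemma exists_radius_of_goodRate {T c : ℝ} (hc : 0 ≤ c) {J : Path d → ℝ≥0∞}
    (hgood : GoodRate T J) (q : Sp d) :
    ∃ R : ℝ, 1 ≤ R ∧ ∀ φ : Path d, φ 0 = q → J φ ≤ ENNReal.ofReal c →
      skorohodDist T (fun _ => 0) φ < R := by
  letI := skorohodTop d T
  have hK : IsCompact {φ : Path d | φ 0 ∈ ({q} : Set (Sp d)) ∧ J φ ≤ ENNReal.ofReal c} :=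
    hgood c hc {q} isCompact_singleton
  set U : ℕ → Set (Path d) := fun j => {ψ | skorohodDist T (fun _ => 0) ψ < (j : ℝ) + 1}
    with hUdef
  have hUopen : ∀ j, IsOpen (U j) := fun j => isOpen_skorohodBall (by positivity) _
  have hcov : {φ : Path d | φ 0 ∈ ({q} : Set (Sp d)) ∧ J φ ≤ ENNReal.ofReal c} ⊆ ⋃ j, U j := by
    intro φ _
    obtain ⟨j, hj⟩ := exists_nat_gt (skorohodDist T (fun _ => 0) φ)
    exact Set.mem_iUnion.mpr ⟨j, lt_trans hj (by linarith)⟩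
  obtain ⟨t₀, ht₀⟩ := hK.elim_finite_subcover U hUopen hcov
  refine ⟨(t₀.sup id : ℕ) + 2, by have := Nat.cast_nonneg (α := ℝ) (t₀.sup id); linarith, fun φ h0 hJ => ?_⟩
  have hmem : φ ∈ ⋃ j ∈ t₀, U j := ht₀ ⟨by simp [h0], hJ⟩
  obtain ⟨j, hjt, hφ⟩ := Set.mem_iUnion₂.mp hmem
  have hj' : (j : ℝ) ≤ (t₀.sup id : ℕ) := by exact_mod_cast Finset.le_sup (f := id) hjt
  calc skorohodDist T (fun _ => 0) φ < (j : ℝ) + 1 := hφ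
    _ ≤ (t₀.sup id : ℕ) + 1 := by linarith
    _ < (t₀.sup id : ℕ) + 2 := by linarith

end Aux
section Aux2

variable {d : ℕ}

lemma exit_mem_FR {ω : Path d} (hcad : CadlagOn ω) {n : ℕ} (hn : (1:ℝ) ≤ n) {R T₂ t : ℝ}
    (ht0 : 0 < t) (ht1 : t + 1 ≤ T₂ * n)
    (hexit : exitTime ω ((n : ℝ) * R) ≤ ENNReal.ofReal t) :
    R ≤ skorohodDist T₂ (fun _ => 0) (scaledPath ((n : ℝ)⁻¹) ω) := by
  have hn0 : (0:ℝ) < n := by linarith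
  have h1 : exitTime ω ((n : ℝ) * R) < ENNReal.ofReal (t + 1) :=
    lt_of_le_of_lt hexit (by rw [ENNReal.ofReal_lt_ofReal_iff (by linarith)]; linarith)
  simp only [exitTime] at h1
  rw [iInf_lt_iff] at h1
  obtain ⟨s, hs⟩ := h1
  rw [iInf_lt_iff] at hs
  obtain ⟨hmem, hslt⟩ := hs
  have hst : s < t + 1 := (ENNReal.ofReal_lt_ofReal_iff (by linarith)).mp hslt
  have hs0 : 0 ≤ s := hmem.1
  have hsR : (n : ℝ) * R ≤ ‖ω s‖ := hmem.2
  obtain ⟨C, hC⟩ := hcad.exists_bound (T₂ * n)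
  have hsc : ∀ u ∈ Icc (0:ℝ) T₂, ‖scaledPath ((n:ℝ)⁻¹) ω u‖ ≤ (n:ℝ)⁻¹ * C := by
    intro u hu
    have he : scaledPath ((n:ℝ)⁻¹) ω u = (n:ℝ)⁻¹ • ω (u * n) := by
      simp only [scaledPath]
      congr 1
      field_simp
    rw [he, norm_smul, norm_inv, Real.norm_natCast]
    refine mul_le_mul_of_nonneg_left ?_ (by positivity)
    refine hC _ ⟨by nlinarith [hu.1], ?_⟩
    nlinarith [hu.2, hu.1]
  refine le_skorohodDist_zero hsc (s := s / n) ⟨by positivity, ?_⟩ ?_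
  · rw [div_le_iff₀ hn0]; linarith
  · have he : scaledPath ((n:ℝ)⁻¹) ω (s / n) = (n:ℝ)⁻¹ • ω s := by
      simp only [scaledPath]
      congr 1
      field_simp
    rw [he, norm_smul, norm_inv, Real.norm_natCast]
    calc R = (n:ℝ)⁻¹ * ((n:ℝ) * R) := by field_simp
      _ ≤ (n:ℝ)⁻¹ * ‖ω s‖ := mul_le_mul_of_nonneg_left hsR (by positivity)

end Aux2
set_option maxHeartbeats 1000000

/-- Under (H1), (H2), (H1') and `I_T(0,0) > 0`, for every bounded
`V ⊆ ℝ^d`, every `q ∈ 𝓡` and every `A > 0` there is `R > 0` such that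
`lim_{δ→0} limsup_{n→∞} (1/n) log sup_{z∈E, |z−nq|<δn} (G(z,nV) − G_{nR}(z,nV)) ≤ −A`. -/
theorem green_trunc_negligible
    {d : ℕ} (M : MarkovSetup d) (I : ℝ → Sp d → Sp d → ℝ)
    (Ipath : ℝ → Path d → ℝ≥0∞)
    (hGfin : ∀ z ∈ M.E, ∀ B : Set (Sp d), IsCompact B → green M.P z B < ⊤)
    (hH1 : H1 M.E M.P I) (hH2 : H2 M.E M.P)
    (hH1' : H1' M.E M.P Ipath I)
    (hI0 : ∃ T : ℝ, 0 < T ∧ 0 < I T 0 0) :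
    ∀ V : Set (Sp d), Bornology.IsBounded V → ∀ q ∈ RSet M.E, ∀ A : ℝ, 0 < A →
      ∃ R : ℝ, 0 < R ∧
        (⨅ δ : {δ : ℝ // 0 < δ},
          limsup (fun n : ℕ =>
            ((((n : ℝ)⁻¹ : ℝ)) : EReal) * ENNReal.log
              (⨆ z ∈ nearE M.E q n δ.1,
                (green M.P z ((n : ℝ) • V) -
                  greenTrunc M.P ((n : ℝ) * R) z ((n : ℝ) • V)))) atTop)
          ≤ -(A : EReal) := by
  intro V hV q _hq A hA
  obtain ⟨T, hT, hI⟩ := hI0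
  -- a norm bound for `V`
  obtain ⟨v₁, hv₁⟩ := (Metric.isBounded_iff_subset_closedBall 0).mp hV
  set v₀ : ℝ := max v₁ 0 with hv₀def
  have hv₀ : 0 ≤ v₀ := le_max_right _ _
  have hVv : V ⊆ closedBall 0 v₀ :=
    hv₁.trans (Metric.closedBall_subset_closedBall (le_max_left _ _))
  clear_value v₀
  obtain ⟨hLSC, -, -, hUC⟩ := hH1 T hT
  -- lower semicontinuity of the rate at (0,0)
  have hLSC0 : ∀ᶠ p : Sp d × Sp d in 𝓝 (0, 0), I T 0 0 / 2 < I T p.1 p.2 :=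
    hLSC (0, 0) (I T 0 0 / 2) (by linarith)
  obtain ⟨η, hη, hball⟩ := Metric.eventually_nhds_iff.mp hLSC0
  set r₀ : ℝ := η / 2 with hr₀def
  have hr₀ : 0 < r₀ := by rw [hr₀def]; positivity
  have hr₀η : r₀ < η := by rw [hr₀def]; linarith
  clear_value r₀
  have hIlow : ∀ v : Sp d, ‖v‖ ≤ r₀ → I T 0 0 / 2 < I T 0 v := by
    intro v hv
    have hd : dist ((0 : Sp d), v) (((0 : Sp d), (0 : Sp d)) : Sp d × Sp d) < η := by
      rw [Prod.dist_eq]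
      simp only [dist_self, dist_zero_right]
      have hm : max (0 : ℝ) ‖v‖ ≤ r₀ := max_le hr₀.le hv
      linarith [hm, hr₀η]
    exact hball hd
  -- upper LDP bound at base point 0 over the compact ball
  have hinfI : ((I T 0 0 / 2 : ℝ) : EReal) ≤
      ⨅ q' ∈ closedBall (0 : Sp d) r₀, ((I T 0 q' : ℝ) : EReal) :=
    le_iInf₂ fun q' hq' =>
      EReal.coe_le_coe_iff.mpr (hIlow q' (mem_closedBall_zero_iff.mp hq')).le
  have hUC0 := hUC 0 (closedBall 0 r₀) (isCompact_closedBall 0 r₀)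
  have hUC0' := le_trans hUC0
    (show -(⨅ q' ∈ closedBall (0 : Sp d) r₀, ((I T 0 q' : ℝ) : EReal)) ≤
        ((-(I T 0 0 / 2) : ℝ) : EReal) from by
      rw [EReal.coe_neg]; exact EReal.neg_le_neg_iff.mpr hinfI)
  set c₁ : ℝ := I T 0 0 / 4 with hc₁def
  have hc₁ : 0 < c₁ := by rw [hc₁def]; linarith
  have hc₁lt : c₁ < I T 0 0 / 2 := by rw [hc₁def]; linarith
  clear_value c₁
  obtain ⟨δ₀, ε₀, hε₀, hTail⟩ :=
    exists_eventually_of_iInf_limsup_le hc₁lt hUC0'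
  -- constants
  set Kq : ℝ := ‖q‖ + 1 with hKqdef
  have hKq : 0 < Kq := by rw [hKqdef]; positivity
  have hKqq : (‖q‖ : ℝ) ≤ Kq := by rw [hKqdef]; linarith
  clear_value Kq
  set C₁ : ℝ := max (max (T * Kq / δ₀.1 + 1) (T * (v₀ + 1) / r₀ + 1))
      (max (T / ε₀ + 1) (2 * T * (A + 2) / c₁ + 1)) with hC₁def
  have hC₁a : T * Kq / δ₀.1 + 1 ≤ C₁ := le_trans (le_max_left _ _) (le_max_left _ _)
  have hC₁b : T * (v₀ + 1) / r₀ + 1 ≤ C₁ := le_trans (le_max_right _ _) (le_max_left _ _)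
  have hC₁c : T / ε₀ + 1 ≤ C₁ := le_trans (le_max_left _ _) (le_max_right _ _)
  have hC₁d : 2 * T * (A + 2) / c₁ + 1 ≤ C₁ := le_trans (le_max_right _ _) (le_max_right _ _)
  have hC₁pos : 0 < C₁ := lt_of_lt_of_le (by positivity) hC₁c
  clear_value C₁
  set T₂ : ℝ := C₁ + 2 with hT₂def
  have hT₂ : 0 < T₂ := by rw [hT₂def]; linarith
  clear_value T₂
  obtain ⟨⟨hGood, -, hSPUp⟩, -⟩ := hH1' T₂ hT₂
  obtain ⟨R, hR1, hRball⟩ :=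
    exists_radius_of_goodRate (T := T₂) (c := A + 2) (by linarith) hGood q
  refine ⟨R, lt_of_lt_of_le one_pos hR1, ?_⟩
  set F : Set (Path d) := {ψ | R ≤ skorohodDist T₂ (fun _ => 0) ψ} with hFdef
  have hFclosed : IsClosed[skorohodTop d T₂] F :=
    isClosed_skorohodCoBall (lt_of_lt_of_le one_pos hR1) _
  have hinfF : ((A + 2 : ℝ) : EReal) ≤
      ⨅ φ ∈ {φ ∈ F | φ 0 = q}, ((Ipath T₂ φ : ℝ≥0∞) : EReal) := by
    refine le_iInf₂ fun φ hφ => ?_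
    by_contra hlt
    push_neg at hlt
    have hle : Ipath T₂ φ ≤ ENNReal.ofReal (A + 2) := by
      rw [← EReal.coe_ennreal_le_coe_ennreal_iff]
      refine le_trans hlt.le ?_
      rw [EReal.coe_ennreal_ofReal]
      exact EReal.coe_le_coe_iff.mpr (le_max_left _ _)
    exact absurd (hRball φ hφ.2 hle) (not_lt.mpr hφ.1)
  have hUpF := hSPUp q F hFclosed
  have hUpF' := le_trans hUpF
    (show -(⨅ φ ∈ {φ ∈ F | φ 0 = q}, ((Ipath T₂ φ : ℝ≥0∞) : EReal)) ≤
        ((-(A + 2) : ℝ) : EReal) from by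
      rw [EReal.coe_neg]; exact EReal.neg_le_neg_iff.mpr hinfF)
  obtain ⟨δ₁, ε₁, hε₁, hHead⟩ :=
    exists_eventually_of_iInf_limsup_le (show (A + 1 : ℝ) < A + 2 by linarith) hUpF'
  set δf : {δ : ℝ // 0 < δ} := ⟨min δ₁.1 1, lt_min δ₁.2 one_pos⟩ with hδfdef
  have hδ₁ : δf.1 ≤ δ₁.1 := min_le_left _ _
  have hδf1 : δf.1 ≤ 1 := min_le_right _ _
  clear_value δf
  -- the tail integral constant
  set a : ℝ := c₁ / T with hadef
  have ha : 0 < a := by rw [hadef]; positivity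
  clear_value a
  have hint : IntegrableOn (fun x : ℝ => Real.exp (-(a / 2) * x)) (Ioi (0 : ℝ)) :=
    exp_neg_integrableOn_Ioi 0 (half_pos ha)
  set K₀ : ℝ≥0∞ := ∫⁻ s in Ioi (0 : ℝ), ENNReal.ofReal (Real.exp (-(a / 2) * s)) with hK₀def
  have hK₀top : K₀ ≠ ⊤ := hint.lintegral_lt_top.ne
  set kr : ℝ := K₀.toReal with hkrdef
  have hkr0 : 0 ≤ kr := ENNReal.toReal_nonneg
  clear_value kr K₀
  -- eventual facts along `n → ∞`
  have hnatT : Tendsto (fun n : ℕ => (n : ℝ)) atTop atTop := tendsto_natCast_atTop_atTop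
  have hev1 : ∀ᶠ n : ℕ in atTop, (1 : ℝ) ≤ (n : ℝ) := hnatT.eventually_ge_atTop 1
  have hev2 : ∀ᶠ n : ℕ in atTop, (n : ℝ)⁻¹ < ε₁ :=
    (tendsto_inv_atTop_zero.comp hnatT).eventually_lt_const hε₁
  have hev3 : ∀ᶠ n : ℕ in atTop, 2 * C₁ + 1 ≤ Real.exp (n : ℝ) / (n : ℝ) ^ 1 :=
    hnatT.eventually ((Real.tendsto_exp_div_pow_atTop 1).eventually_ge_atTop _)
  have hev4 : ∀ᶠ n : ℕ in atTop, 2 * kr + 1 ≤ Real.exp (2 * (n : ℝ)) := by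
    have h2n : Tendsto (fun n : ℕ => 2 * (n : ℝ)) atTop atTop :=
      (tendsto_const_mul_atTop_of_pos two_pos).mpr hnatT
    exact (Real.tendsto_exp_atTop.comp h2n).eventually_ge_atTop _
  refine le_trans (iInf_le _ δf) ?_
  refine limsup_le_of_le ?_ ?_
  · isBoundedDefault
  filter_upwards [hev1, hev2, hev3, hev4] with n h1 h2 h3 h4
  have hn0 : (0 : ℝ) < n := by linarith
  -- numeric estimates
  have h3' : C₁ * n * Real.exp (-(A + 1) * n) ≤ 1 / 2 * Real.exp (-A * n) := by
    rw [pow_one] at h3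
    have hxp : (2 * C₁ + 1) * (n : ℝ) ≤ Real.exp (n : ℝ) := by
      calc (2 * C₁ + 1) * (n : ℝ) ≤ Real.exp (n : ℝ) / (n : ℝ) * (n : ℝ) :=
            mul_le_mul_of_nonneg_right h3 hn0.le
        _ = Real.exp (n : ℝ) := by field_simp
    have e2 : C₁ * n * Real.exp (-(n : ℝ)) ≤ 1 / 2 := by
      have h5 : C₁ * n ≤ Real.exp (n : ℝ) / 2 := by linarith [hxp, hn0]
      calc C₁ * (n : ℝ) * Real.exp (-(n : ℝ))
          ≤ Real.exp (n : ℝ) / 2 * Real.exp (-(n : ℝ)) :=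
            mul_le_mul_of_nonneg_right h5 (Real.exp_pos _).le
        _ = 1 / 2 := by
            rw [Real.exp_neg]
            field_simp
    have hes : Real.exp (-(A + 1) * n) = Real.exp (-(n : ℝ)) * Real.exp (-A * n) := by
      rw [← Real.exp_add]
      congr 1
      ring
    calc C₁ * n * Real.exp (-(A + 1) * n)
        = C₁ * n * Real.exp (-(n : ℝ)) * Real.exp (-A * n) := by
          rw [hes]; ring
      _ ≤ 1 / 2 * Real.exp (-A * n) :=
          mul_le_mul_of_nonneg_right e2 (Real.exp_pos _).le
  have h4' : kr * Real.exp (-(A + 2) * n) ≤ 1 / 2 * Real.exp (-A * n) := by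
    have e2 : kr * Real.exp (-(2 * (n : ℝ))) ≤ 1 / 2 := by
      have h5 : kr ≤ Real.exp (2 * (n : ℝ)) / 2 := by linarith
      calc kr * Real.exp (-(2 * (n : ℝ)))
          ≤ Real.exp (2 * (n : ℝ)) / 2 * Real.exp (-(2 * (n : ℝ))) :=
            mul_le_mul_of_nonneg_right h5 (Real.exp_pos _).le
        _ = 1 / 2 := by
            rw [Real.exp_neg]
            field_simp
    have hes : Real.exp (-(A + 2) * n) = Real.exp (-(2 * (n : ℝ))) * Real.exp (-A * n) := by
      rw [← Real.exp_add]
      congr 1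
      ring
    calc kr * Real.exp (-(A + 2) * n)
        = kr * Real.exp (-(2 * (n : ℝ))) * Real.exp (-A * n) := by
          rw [hes]; ring
      _ ≤ 1 / 2 * Real.exp (-A * n) :=
          mul_le_mul_of_nonneg_right e2 (Real.exp_pos _).le
  -- the main per-`z` bound
  have hXle : (⨆ z ∈ nearE M.E q (n : ℝ) δf.1,
      (green M.P z ((n : ℝ) • V) - greenTrunc M.P ((n : ℝ) * R) z ((n : ℝ) • V)))
      ≤ ENNReal.ofReal (Real.exp (-A * n)) := by
    refine iSup₂_le fun z hz => ?_
    obtain ⟨hzE, hznear⟩ := hz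
    have hbad : (M.P z) {ω : Path d | ¬ CadlagOn ω} = 0 := ae_iff.mp (M.cadlag z hzE)
    set MM : ℝ := C₁ * n with hMMdef
    have hMM : 0 < MM := mul_pos hC₁pos hn0
    clear_value MM
    -- exit probability bound
    have hβ : (M.P z) {ω | scaledPath ((n : ℝ)⁻¹) ω ∈ F} ≤
        ENNReal.ofReal (Real.exp (-(A + 1) * n)) := by
      have hmemq : z ∈ nearScaled M.E ((n : ℝ)⁻¹) q δ₁.1 := by
        refine ⟨hzE, ?_⟩
        have heq : (n : ℝ)⁻¹ • z - q = (n : ℝ)⁻¹ • (z - (n : ℝ) • q) := by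
          rw [smul_sub, smul_smul, inv_mul_cancel₀ hn0.ne', one_smul]
        rw [heq, norm_smul, norm_inv, Real.norm_natCast]
        have : (n : ℝ)⁻¹ * ‖z - (n : ℝ) • q‖ < (n : ℝ)⁻¹ * (δf.1 * n) :=
          mul_lt_mul_of_pos_left hznear (inv_pos.mpr hn0)
        have heq2 : (n : ℝ)⁻¹ * (δf.1 * n) = δf.1 := by field_simp [hn0.ne']
        rw [heq2] at this
        exact lt_of_lt_of_le this hδ₁
      calc (M.P z) {ω | scaledPath ((n : ℝ)⁻¹) ω ∈ F}
          ≤ ⨆ z' ∈ nearScaled M.E ((n : ℝ)⁻¹) q δ₁.1,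
            (M.P z') {ω | scaledPath ((n : ℝ)⁻¹) ω ∈ F} :=
            le_biSup (fun z' => (M.P z') {ω | scaledPath ((n : ℝ)⁻¹) ω ∈ F}) hmemq
        _ ≤ ENNReal.ofReal (Real.exp (-(A + 1) / ((n : ℝ)⁻¹))) :=
            le_ofReal_exp_of_mul_log_lt (inv_pos.mpr hn0) (hHead _ (inv_pos.mpr hn0) h2)
        _ = ENNReal.ofReal (Real.exp (-(A + 1) * n)) := by
            rw [show -(A + 1) / ((n : ℝ)⁻¹) = -(A + 1) * n from by field_simp]
    -- head pointwise estimate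
    have hheadpt : ∀ t ∈ Ioc (0 : ℝ) MM,
        (M.P z) {ω | ω t ∈ (n : ℝ) • V} ≤
          (M.P z) {ω | ω t ∈ (n : ℝ) • V ∧ ENNReal.ofReal t < exitTime ω ((n : ℝ) * R)}
            + ENNReal.ofReal (Real.exp (-(A + 1) * n)) := by
      intro t ht
      have hsub : {ω : Path d | ω t ∈ (n : ℝ) • V} ⊆
          {ω | ω t ∈ (n : ℝ) • V ∧ ENNReal.ofReal t < exitTime ω ((n : ℝ) * R)} ∪
          ({ω | scaledPath ((n : ℝ)⁻¹) ω ∈ F} ∪ {ω | ¬ CadlagOn ω}) := by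
        intro ω hω
        by_cases hex : ENNReal.ofReal t < exitTime ω ((n : ℝ) * R)
        · exact Or.inl ⟨hω, hex⟩
        by_cases hcad : CadlagOn ω
        · refine Or.inr (Or.inl ?_)
          show R ≤ skorohodDist T₂ (fun _ => 0) (scaledPath ((n : ℝ)⁻¹) ω)
          refine exit_mem_FR hcad h1 ht.1 ?_ (not_lt.mp hex)
          rw [hT₂def]
          have ht2 := ht.2
          rw [hMMdef] at ht2
          have e := mul_le_mul_of_nonneg_left h1 hC₁pos.le
          linarith [ht2, h1]
        · exact Or.inr (Or.inr hcad)
      calc (M.P z) {ω | ω t ∈ (n : ℝ) • V}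
          ≤ (M.P z) ({ω | ω t ∈ (n : ℝ) • V ∧ ENNReal.ofReal t < exitTime ω ((n : ℝ) * R)} ∪
            ({ω | scaledPath ((n : ℝ)⁻¹) ω ∈ F} ∪ {ω | ¬ CadlagOn ω})) :=
            measure_mono hsub
        _ ≤ (M.P z) {ω | ω t ∈ (n : ℝ) • V ∧ ENNReal.ofReal t < exitTime ω ((n : ℝ) * R)}
            + (M.P z) ({ω | scaledPath ((n : ℝ)⁻¹) ω ∈ F} ∪ {ω | ¬ CadlagOn ω}) :=
            measure_union_le _ _
        _ ≤ (M.P z) {ω | ω t ∈ (n : ℝ) • V ∧ ENNReal.ofReal t < exitTime ω ((n : ℝ) * R)}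
            + ((M.P z) {ω | scaledPath ((n : ℝ)⁻¹) ω ∈ F} + (M.P z) {ω | ¬ CadlagOn ω}) :=
            add_le_add le_rfl (measure_union_le _ _)
        _ ≤ (M.P z) {ω | ω t ∈ (n : ℝ) • V ∧ ENNReal.ofReal t < exitTime ω ((n : ℝ) * R)}
            + (ENNReal.ofReal (Real.exp (-(A + 1) * n)) + 0) :=
            add_le_add le_rfl (add_le_add hβ (le_of_eq hbad))
        _ = _ := by rw [add_zero]
    -- tail pointwise estimate
    have htailpt : ∀ t ∈ Ioi MM,
        (M.P z) {ω | ω t ∈ (n : ℝ) • V} ≤ ENNReal.ofReal (Real.exp (-a * t)) := by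
      intro t ht
      have htM : MM < t := ht
      have ht0 : 0 < t := lt_trans hMM htM
      have hCn : C₁ * (n : ℝ) < t := by rwa [hMMdef] at htM
      have hεt : 0 < T / t := div_pos hT ht0
      have hεt2 : T / t < ε₀ := by
        rw [div_lt_iff₀ ht0]
        have h5 : T / ε₀ + 1 ≤ C₁ * n := by
          have e1 : C₁ * 1 ≤ C₁ * n := mul_le_mul_of_nonneg_left h1 hC₁pos.le
          linarith [hC₁c, e1]
        have h6 : T / ε₀ < t := by linarith
        calc T = ε₀ * (T / ε₀) := by field_simp
          _ < ε₀ * t := mul_lt_mul_of_pos_left h6 hε₀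
      have hzn : ‖z‖ ≤ (n : ℝ) * Kq := by
        calc ‖z‖ = ‖z - (n : ℝ) • q + (n : ℝ) • q‖ := by rw [sub_add_cancel]
          _ ≤ ‖z - (n : ℝ) • q‖ + ‖(n : ℝ) • q‖ := norm_add_le _ _
          _ ≤ δf.1 * n + (n : ℝ) * ‖q‖ := by
              refine add_le_add hznear.le ?_
              rw [norm_smul, Real.norm_natCast]
          _ ≤ 1 * n + n * ‖q‖ := by
              have e := mul_le_mul_of_nonneg_right hδf1 hn0.le
              linarith [e]
          _ = (n : ℝ) * Kq := by rw [hKqdef]; ring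
      have hzmem : z ∈ nearScaled M.E (T / t) 0 δ₀.1 := by
        refine ⟨hzE, ?_⟩
        rw [sub_zero, norm_smul, Real.norm_eq_abs, abs_of_pos hεt]
        have h8 : T * ((n : ℝ) * Kq) < δ₀.1 * t := by
          have h9 : δ₀.1 * C₁ ≥ T * Kq + δ₀.1 := by
            calc δ₀.1 * C₁ ≥ δ₀.1 * (T * Kq / δ₀.1 + 1) :=
                  mul_le_mul_of_nonneg_left hC₁a δ₀.2.le
              _ = T * Kq + δ₀.1 := by field_simp [δ₀.2.ne']
          have e1 : δ₀.1 * (C₁ * n) < δ₀.1 * t := mul_lt_mul_of_pos_left hCn δ₀.2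
          have e2 : (T * Kq + δ₀.1) * n ≤ δ₀.1 * C₁ * n :=
            mul_le_mul_of_nonneg_right h9 hn0.le
          have e3 : (0 : ℝ) < δ₀.1 * n := mul_pos δ₀.2 hn0
          linarith [e1, e2, e3]
        calc T / t * ‖z‖ ≤ T / t * ((n : ℝ) * Kq) :=
              mul_le_mul_of_nonneg_left hzn hεt.le
          _ < δ₀.1 := by
              rw [div_mul_eq_mul_div, div_lt_iff₀ ht0]
              linarith [h8]
      have hincl : {ω : Path d | ω t ∈ (n : ℝ) • V} ⊆
          {ω | scaledPath (T / t) ω T ∈ closedBall (0 : Sp d) r₀} := by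
        intro ω hω
        show scaledPath (T / t) ω T ∈ closedBall (0 : Sp d) r₀
        have he : scaledPath (T / t) ω T = (T / t) • ω t := by
          simp only [scaledPath]
          congr 1
          field_simp
        rw [he, mem_closedBall_zero_iff]
        obtain ⟨y, hy, hyy⟩ := hω
        rw [← hyy, norm_smul, norm_smul, Real.norm_eq_abs, abs_of_pos hεt, Real.norm_natCast]
        have hyv : ‖y‖ ≤ v₀ := mem_closedBall_zero_iff.mp (hVv hy)
        have h10 : T * ((n : ℝ) * v₀) ≤ r₀ * t := by
          have h11 : r₀ * C₁ ≥ T * (v₀ + 1) + r₀ := by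
            calc r₀ * C₁ ≥ r₀ * (T * (v₀ + 1) / r₀ + 1) :=
                  mul_le_mul_of_nonneg_left hC₁b hr₀.le
              _ = T * (v₀ + 1) + r₀ := by field_simp [hr₀.ne']
          have e1 : r₀ * (C₁ * n) ≤ r₀ * t := mul_le_mul_of_nonneg_left hCn.le hr₀.le
          have e2 : (T * (v₀ + 1) + r₀) * n ≤ r₀ * C₁ * n :=
            mul_le_mul_of_nonneg_right h11 hn0.le
          have e3 : (0 : ℝ) ≤ (T + r₀) * n := mul_nonneg (by linarith) hn0.le
          linarith [e1, e2, e3]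
        calc T / t * ((n : ℝ) * ‖y‖) ≤ T / t * ((n : ℝ) * v₀) := by
              refine mul_le_mul_of_nonneg_left ?_ hεt.le
              exact mul_le_mul_of_nonneg_left hyv (Nat.cast_nonneg n)
          _ ≤ r₀ := by
              rw [div_mul_eq_mul_div, div_le_iff₀ ht0]
              linarith [h10]
      calc (M.P z) {ω | ω t ∈ (n : ℝ) • V}
          ≤ (M.P z) {ω | scaledPath (T / t) ω T ∈ closedBall (0 : Sp d) r₀} :=
            measure_mono hincl
        _ ≤ ⨆ z' ∈ nearScaled M.E (T / t) 0 δ₀.1,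
            (M.P z') {ω | scaledPath (T / t) ω T ∈ closedBall (0 : Sp d) r₀} :=
            le_biSup (fun z' => (M.P z') {ω | scaledPath (T / t) ω T ∈ closedBall (0 : Sp d) r₀}) hzmem
        _ ≤ ENNReal.ofReal (Real.exp (-c₁ / (T / t))) :=
            le_ofReal_exp_of_mul_log_lt hεt (hTail _ hεt hεt2)
        _ = ENNReal.ofReal (Real.exp (-a * t)) := by
            rw [show -c₁ / (T / t) = -a * t from by
              rw [hadef]; field_simp]
    -- assembling the integral bounds
    have hsplit : green M.P z ((n : ℝ) • V) =
        (∫⁻ t in Ioc (0 : ℝ) MM, (M.P z) {ω | ω t ∈ (n : ℝ) • V}) +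
        ∫⁻ t in Ioi MM, (M.P z) {ω | ω t ∈ (n : ℝ) • V} := by
      simp only [green]
      rw [← Ioc_union_Ioi_eq_Ioi hMM.le,
        lintegral_union measurableSet_Ioi (Set.Ioc_disjoint_Ioi le_rfl)]
    have hheadInt : (∫⁻ t in Ioc (0 : ℝ) MM, (M.P z) {ω | ω t ∈ (n : ℝ) • V}) ≤
        greenTrunc M.P ((n : ℝ) * R) z ((n : ℝ) • V) +
          ENNReal.ofReal (Real.exp (-(A + 1) * n)) * ENNReal.ofReal MM := by
      calc (∫⁻ t in Ioc (0 : ℝ) MM, (M.P z) {ω | ω t ∈ (n : ℝ) • V})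
          ≤ ∫⁻ t in Ioc (0 : ℝ) MM,
            ((M.P z) {ω | ω t ∈ (n : ℝ) • V ∧ ENNReal.ofReal t < exitTime ω ((n : ℝ) * R)}
              + ENNReal.ofReal (Real.exp (-(A + 1) * n))) :=
          lintegral_mono_ae (ae_restrict_of_forall_mem measurableSet_Ioc hheadpt)
        _ = (∫⁻ t in Ioc (0 : ℝ) MM,
              (M.P z) {ω | ω t ∈ (n : ℝ) • V ∧ ENNReal.ofReal t < exitTime ω ((n : ℝ) * R)})
            + ENNReal.ofReal (Real.exp (-(A + 1) * n)) * volume (Ioc (0 : ℝ) MM) := by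
          rw [lintegral_add_right _ measurable_const, setLIntegral_const]
        _ ≤ greenTrunc M.P ((n : ℝ) * R) z ((n : ℝ) • V) +
            ENNReal.ofReal (Real.exp (-(A + 1) * n)) * ENNReal.ofReal MM := by
          refine add_le_add ?_ ?_
          · simp only [greenTrunc]
            exact lintegral_mono' (Measure.restrict_mono Ioc_subset_Ioi_self le_rfl) le_rfl
          · rw [Real.volume_Ioc, sub_zero]
    have htailInt : (∫⁻ t in Ioi MM, (M.P z) {ω | ω t ∈ (n : ℝ) • V}) ≤
        ENNReal.ofReal (Real.exp (-(a / 2) * MM)) * K₀ := by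
      have hmeas : Measurable fun t : ℝ => ENNReal.ofReal (Real.exp (-(a / 2) * t)) :=
        ENNReal.measurable_ofReal.comp
          (Real.continuous_exp.comp (continuous_const.mul continuous_id)).measurable
      calc (∫⁻ t in Ioi MM, (M.P z) {ω | ω t ∈ (n : ℝ) • V})
          ≤ ∫⁻ t in Ioi MM, ENNReal.ofReal (Real.exp (-a * t)) :=
          lintegral_mono_ae (ae_restrict_of_forall_mem measurableSet_Ioi htailpt)
        _ ≤ ∫⁻ t in Ioi MM, ENNReal.ofReal (Real.exp (-(a / 2) * MM)) *
              ENNReal.ofReal (Real.exp (-(a / 2) * t)) := by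
          refine lintegral_mono_ae (ae_restrict_of_forall_mem measurableSet_Ioi fun t ht => ?_)
          rw [← ENNReal.ofReal_mul (Real.exp_pos _).le, ← Real.exp_add]
          refine ENNReal.ofReal_le_ofReal (Real.exp_le_exp.mpr ?_)
          have htM : MM < t := ht
          have := mul_le_mul_of_nonneg_left htM.le (show (0 : ℝ) ≤ a / 2 by positivity)
          linarith
        _ = ENNReal.ofReal (Real.exp (-(a / 2) * MM)) *
            ∫⁻ t in Ioi MM, ENNReal.ofReal (Real.exp (-(a / 2) * t)) :=
          lintegral_const_mul _ hmeas
        _ ≤ ENNReal.ofReal (Real.exp (-(a / 2) * MM)) * K₀ := by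
          refine mul_le_mul_right ?_ _
          rw [hK₀def]
          exact lintegral_mono' (Measure.restrict_mono (Set.Ioi_subset_Ioi hMM.le) le_rfl) le_rfl
    -- numeric combination
    have hnum : ENNReal.ofReal (Real.exp (-(A + 1) * n)) * ENNReal.ofReal MM
        + ENNReal.ofReal (Real.exp (-(a / 2) * MM)) * K₀ ≤
        ENNReal.ofReal (Real.exp (-A * n)) := by
      have t1 : ENNReal.ofReal (Real.exp (-(A + 1) * n)) * ENNReal.ofReal MM
          = ENNReal.ofReal (MM * Real.exp (-(A + 1) * n)) := by
        rw [← ENNReal.ofReal_mul (Real.exp_pos _).le]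
        congr 1
        ring
      have t2 : ENNReal.ofReal (Real.exp (-(a / 2) * MM)) * K₀ ≤
          ENNReal.ofReal (kr * Real.exp (-(A + 2) * n)) := by
        conv_lhs => rw [← ENNReal.ofReal_toReal hK₀top, ← hkrdef]
        rw [← ENNReal.ofReal_mul (Real.exp_pos _).le]
        refine ENNReal.ofReal_le_ofReal ?_
        have hMMA : (A + 2) * n ≤ a / 2 * MM := by
          have h12 : 2 * T * (A + 2) ≤ c₁ * C₁ := by
            calc c₁ * C₁ ≥ c₁ * (2 * T * (A + 2) / c₁ + 1) :=
                  mul_le_mul_of_nonneg_left hC₁d hc₁.le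
              _ = 2 * T * (A + 2) + c₁ := by field_simp [hc₁.ne']
              _ ≥ 2 * T * (A + 2) := by linarith
          have hexpand : a / 2 * MM = c₁ * C₁ * n / (2 * T) := by
            rw [hadef, hMMdef]
            field_simp
          rw [hexpand, le_div_iff₀ (by linarith : (0:ℝ) < 2 * T)]
          have e := mul_le_mul_of_nonneg_right h12 hn0.le
          linarith [e]
        calc Real.exp (-(a / 2) * MM) * kr ≤ Real.exp (-((A + 2) * n)) * kr := by
              refine mul_le_mul_of_nonneg_right (Real.exp_le_exp.mpr (by linarith)) hkr0
          _ = kr * Real.exp (-(A + 2) * n) := by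
              rw [mul_comm]
              congr 1
              ring
      calc ENNReal.ofReal (Real.exp (-(A + 1) * n)) * ENNReal.ofReal MM
          + ENNReal.ofReal (Real.exp (-(a / 2) * MM)) * K₀
          ≤ ENNReal.ofReal (MM * Real.exp (-(A + 1) * n))
            + ENNReal.ofReal (kr * Real.exp (-(A + 2) * n)) := add_le_add t1.le t2
        _ ≤ ENNReal.ofReal (1 / 2 * Real.exp (-A * n))
            + ENNReal.ofReal (1 / 2 * Real.exp (-A * n)) :=
            add_le_add (ENNReal.ofReal_le_ofReal h3') (ENNReal.ofReal_le_ofReal h4')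
        _ = ENNReal.ofReal (Real.exp (-A * n)) := by
            rw [← ENNReal.ofReal_add (by positivity) (by positivity)]
            congr 1
            ring
    rw [tsub_le_iff_right, hsplit]
    calc (∫⁻ t in Ioc (0 : ℝ) MM, (M.P z) {ω | ω t ∈ (n : ℝ) • V}) +
          ∫⁻ t in Ioi MM, (M.P z) {ω | ω t ∈ (n : ℝ) • V}
        ≤ (greenTrunc M.P ((n : ℝ) * R) z ((n : ℝ) • V) +
            ENNReal.ofReal (Real.exp (-(A + 1) * n)) * ENNReal.ofReal MM) +
          ENNReal.ofReal (Real.exp (-(a / 2) * MM)) * K₀ := add_le_add hheadInt htailInt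
      _ = greenTrunc M.P ((n : ℝ) * R) z ((n : ℝ) • V) +
          (ENNReal.ofReal (Real.exp (-(A + 1) * n)) * ENNReal.ofReal MM +
            ENNReal.ofReal (Real.exp (-(a / 2) * MM)) * K₀) := by rw [add_assoc]
      _ ≤ greenTrunc M.P ((n : ℝ) * R) z ((n : ℝ) • V) + ENNReal.ofReal (Real.exp (-A * n)) :=
          add_le_add le_rfl hnum
      _ = ENNReal.ofReal (Real.exp (-A * n)) + greenTrunc M.P ((n : ℝ) * R) z ((n : ℝ) • V) :=
          add_comm _ _
  -- conclude
  have hfin := mul_log_le_of_le_ofReal_exp (ε := (n : ℝ)⁻¹) (inv_pos.mpr hn0) hXle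
  refine le_trans hfin ?_
  have heq : (n : ℝ)⁻¹ * (-A * n) = -A := by field_simp
  rw [heq, EReal.coe_neg]

end GreenLDP
end
end

section
/- If the family Z^ε(T) = ε Z(T/ε) satisfies the weak large deviation principle in ℝ^d with a rate function I_T for some T > 0, then it satisfies the weak large deviation principle for every T > 0, and the rate functions obey the scaling relation I_{θT}(θq, θq') = θ · I_T(q,q') for all θ > 0, T > 0 and q,q' ∈ ℝ^d. -/
open MeasureTheory Filter Set Metric
open scoped ENNReal Topology Pointwise

noncomputable section

namespace GreenLDP

variable {d : ℕ}

section ScalingAux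

/-- Multiplication by a positive real constant, as an order isomorphism of `EReal`. -/
def mulIso (c : ℝ) (hc : 0 < c) : EReal ≃o EReal where
  toFun x := (c : EReal) * x
  invFun x := ((c⁻¹ : ℝ) : EReal) * x
  left_inv x := by
    show ((c⁻¹ : ℝ) : EReal) * ((c : EReal) * x) = x
    rw [← mul_assoc, ← EReal.coe_mul, inv_mul_cancel₀ hc.ne', EReal.coe_one, one_mul]
  right_inv x := by
    show (c : EReal) * (((c⁻¹ : ℝ) : EReal) * x) = x
    rw [← mul_assoc, ← EReal.coe_mul, mul_inv_cancel₀ hc.ne', EReal.coe_one, one_mul]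
  map_rel_iff' := by
    intro x y
    show (c : EReal) * x ≤ (c : EReal) * y ↔ x ≤ y
    constructor
    · intro hxy
      have h2 := mul_le_mul_of_nonneg_left hxy
        (EReal.coe_nonneg.2 (inv_pos.2 hc).le : (0 : EReal) ≤ ((c⁻¹ : ℝ) : EReal))
      rwa [← mul_assoc, ← mul_assoc, ← EReal.coe_mul, inv_mul_cancel₀ hc.ne',
        EReal.coe_one, one_mul, one_mul] at h2
    · intro hxy
      exact mul_le_mul_of_nonneg_left hxy (EReal.coe_nonneg.2 hc.le)

@[simp] lemma mulIso_apply (c : ℝ) (hc : 0 < c) (x : EReal) :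
    mulIso c hc x = (c : EReal) * x := rfl

lemma mulIso_neg (c : ℝ) (hc : 0 < c) (x : EReal) :
    mulIso c hc (-x) = -(mulIso c hc x) := by
  simp only [mulIso_apply, mul_neg]

lemma map_div_pos_nhdsGT (c : ℝ) (hc : 0 < c) :
    Filter.map (fun x : ℝ => x / c) (𝓝[>] (0 : ℝ)) = 𝓝[>] (0 : ℝ) := by
  have hne : (c : ℝ)⁻¹ ≠ 0 := inv_ne_zero hc.ne'
  have h2 := (Homeomorph.mulLeft₀ (c : ℝ)⁻¹ hne).isEmbedding.map_nhdsWithin_eq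
    (Set.Ioi (0 : ℝ)) 0
  rw [Homeomorph.coe_mulLeft₀] at h2
  simp only [mul_zero, Set.image_const_mul_Ioi_zero (inv_pos.2 hc)] at h2
  rw [show (fun x : ℝ => x / c) = fun x : ℝ => c⁻¹ * x from
    funext fun x => div_eq_inv_mul x c]
  exact h2

lemma liminf_div_comp (u : ℝ → EReal) (c : ℝ) (hc : 0 < c) :
    liminf (fun ε : ℝ => u (ε / c)) (𝓝[>] (0 : ℝ)) = liminf u (𝓝[>] (0 : ℝ)) := by
  conv_rhs => rw [← map_div_pos_nhdsGT c hc]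
  rw [Filter.liminf_eq, Filter.liminf_eq]
  simp only [Filter.eventually_map]

lemma limsup_div_comp (u : ℝ → EReal) (c : ℝ) (hc : 0 < c) :
    limsup (fun ε : ℝ => u (ε / c)) (𝓝[>] (0 : ℝ)) = limsup u (𝓝[>] (0 : ℝ)) := by
  conv_rhs => rw [← map_div_pos_nhdsGT c hc]
  rw [Filter.limsup_eq, Filter.limsup_eq]
  simp only [Filter.eventually_map]

variable {d : ℕ}

lemma nearScaled_scale (E : Set (Sp d)) {c : ℝ} (hc : 0 < c) (ε δ : ℝ) (q : Sp d) :
    nearScaled E ε q δ = nearScaled E (ε / c) (c⁻¹ • q) (δ / c) := by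
  ext z
  simp only [nearScaled, Set.mem_sep_iff]
  refine and_congr_right fun _ => ?_
  have hv : (ε / c) • z - c⁻¹ • q = c⁻¹ • (ε • z - q) := by
    rw [div_eq_inv_mul, ← smul_smul, ← smul_sub]
  rw [hv, norm_smul, Real.norm_eq_abs, abs_of_pos (inv_pos.2 hc), div_eq_inv_mul]
  exact (mul_lt_mul_iff_right₀ (inv_pos.2 hc)).symm

lemma scaledPath_scale {c : ℝ} (hc : c ≠ 0) (T₀ ε : ℝ) (ω : Path d) :
    scaledPath (ε / c) ω T₀ = c⁻¹ • scaledPath ε ω (c * T₀) := by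
  simp only [scaledPath, smul_smul]
  have h2 : T₀ / (ε / c) = c * T₀ / ε := by rw [div_div_eq_mul_div, mul_comm]
  have h1 : ε / c = c⁻¹ * ε := div_eq_inv_mul ε c
  rw [h2, h1]

lemma scaledSet_scale {c : ℝ} (hc : 0 < c) (T₀ ε : ℝ) (S : Set (Sp d)) :
    {ω : Path d | scaledPath ε ω (c * T₀) ∈ S}
      = {ω : Path d | scaledPath (ε / c) ω T₀ ∈ c⁻¹ • S} := by
  ext ω
  simp only [Set.mem_setOf_eq, scaledPath_scale hc.ne' T₀ ε ω,
    Set.mem_smul_set_iff_inv_smul_mem₀ (inv_ne_zero hc.ne'), inv_inv,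
    smul_inv_smul₀ hc.ne']

lemma fun_scale_inf (E : Set (Sp d)) (P : Sp d → Measure (Path d)) {c : ℝ}
    (hc : 0 < c) (T₀ : ℝ) (q : Sp d) (δ : ℝ) (S : Set (Sp d)) (ε : ℝ) :
    (ε : EReal) * ENNReal.log
        (⨅ z ∈ nearScaled E ε q δ, P z {ω | scaledPath ε ω (c * T₀) ∈ S})
      = (c : EReal) * (((ε / c : ℝ) : EReal) * ENNReal.log
        (⨅ z ∈ nearScaled E (ε / c) (c⁻¹ • q) (δ / c),
          P z {ω | scaledPath (ε / c) ω T₀ ∈ c⁻¹ • S})) := by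
  rw [← nearScaled_scale E hc ε δ q, ← scaledSet_scale hc T₀ ε S, ← mul_assoc,
    ← EReal.coe_mul,
    show c * (ε / c) = ε by field_simp]

lemma fun_scale_sup (E : Set (Sp d)) (P : Sp d → Measure (Path d)) {c : ℝ}
    (hc : 0 < c) (T₀ : ℝ) (q : Sp d) (δ : ℝ) (S : Set (Sp d)) (ε : ℝ) :
    (ε : EReal) * ENNReal.log
        (⨆ z ∈ nearScaled E ε q δ, P z {ω | scaledPath ε ω (c * T₀) ∈ S})
      = (c : EReal) * (((ε / c : ℝ) : EReal) * ENNReal.log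
        (⨆ z ∈ nearScaled E (ε / c) (c⁻¹ • q) (δ / c),
          P z {ω | scaledPath (ε / c) ω T₀ ∈ c⁻¹ • S})) := by
  rw [← nearScaled_scale E hc ε δ q, ← scaledSet_scale hc T₀ ε S, ← mul_assoc,
    ← EReal.coe_mul,
    show c * (ε / c) = ε by field_simp]

lemma biInf_smul_set {c : ℝ} (hc : 0 < c) (O : Set (Sp d)) (f : Sp d → EReal) :
    (⨅ q' ∈ O, f (c⁻¹ • q')) = ⨅ q' ∈ c⁻¹ • O, f q' := by
  apply le_antisymm
  · refine le_iInf₂ fun q' hq' => ?_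
    obtain ⟨p, hp, rfl⟩ := hq'
    exact iInf₂_le p hp
  · exact le_iInf₂ fun p hp => iInf₂_le (c⁻¹ • p) (Set.smul_mem_smul_set hp)

lemma orderIso_biInf {α : Type*} (e : EReal ≃o EReal) (s : Set α) (f : α → EReal) :
    e (⨅ x ∈ s, f x) = ⨅ x ∈ s, e (f x) := by
  rw [e.map_iInf]; exact iInf_congr fun x => e.map_iInf _

lemma lsc_const_mul {α : Type*} [TopologicalSpace α] {f : α → ℝ}
    (hf : LowerSemicontinuous f) {c : ℝ} (hc : 0 < c) :
    LowerSemicontinuous fun x => c * f x := by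
  intro x y hy
  simp only at hy
  have hy' : y / c < f x := by rw [div_lt_iff₀ hc, mul_comm]; exact hy
  filter_upwards [hf x (y / c) hy'] with x' hx'
  calc y = c * (y / c) := by field_simp
  _ < c * f x' := (mul_lt_mul_iff_right₀ hc).2 hx'

lemma ldpLower_scale {E : Set (Sp d)} {P : Sp d → Measure (Path d)} {T₀ : ℝ}
    {I₀ : Sp d → Sp d → ℝ}
    (hl : LDPLower E P T₀ (fun q q' => ((I₀ q q' : ℝ) : EReal)))
    {c : ℝ} (hc : 0 < c) :
    LDPLower E P (c * T₀)
      (fun q q' => ((c * I₀ (c⁻¹ • q) (c⁻¹ • q') : ℝ) : EReal)) := by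
  intro q O hO
  set e := mulIso c hc with he
  have h0 := hl (c⁻¹ • q) (c⁻¹ • O) (hO.smul₀ (inv_ne_zero hc.ne'))
  have hL : (⨅ q' ∈ O, ((c * I₀ (c⁻¹ • q) (c⁻¹ • q') : ℝ) : EReal))
      = e (⨅ q' ∈ c⁻¹ • O, ((I₀ (c⁻¹ • q) q' : ℝ) : EReal)) := by
    rw [orderIso_biInf,
      ← biInf_smul_set hc O (fun q' => e ((I₀ (c⁻¹ • q) q' : ℝ) : EReal))]
    refine iInf_congr fun q' => iInf_congr fun _ => ?_
    rw [he, mulIso_apply, EReal.coe_mul]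
  have hδ : ∀ δ : ℝ, 0 < δ →
      liminf (fun ε : ℝ => (ε : EReal) * ENNReal.log
        (⨅ z ∈ nearScaled E ε q δ, P z {ω | scaledPath ε ω (c * T₀) ∈ O}))
        (𝓝[>] (0 : ℝ))
      = e (liminf (fun ε : ℝ => (ε : EReal) * ENNReal.log
        (⨅ z ∈ nearScaled E ε (c⁻¹ • q) (δ / c),
          P z {ω | scaledPath ε ω T₀ ∈ c⁻¹ • O})) (𝓝[>] (0 : ℝ))) := by
    intro δ hδpos
    rw [OrderIso.liminf_apply e]
    rw [← liminf_div_comp (fun ε : ℝ => e ((ε : EReal) * ENNReal.log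
      (⨅ z ∈ nearScaled E ε (c⁻¹ • q) (δ / c),
        P z {ω | scaledPath ε ω T₀ ∈ c⁻¹ • O}))) c hc]
    refine Filter.liminf_congr (Filter.Eventually.of_forall fun ε => ?_)
    rw [he, mulIso_apply]
    exact fun_scale_inf E P hc T₀ q δ O ε
  rw [hL, ← mulIso_neg c hc]
  refine le_trans ((mulIso c hc).monotone h0) ?_
  rw [OrderIso.map_iSup]
  refine iSup_le fun δ' => ?_
  have hkey := hδ (c * δ'.1) (mul_pos hc δ'.2)
  rw [show c * δ'.1 / c = δ'.1 by field_simp] at hkey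
  exact le_iSup_of_le ⟨c * δ'.1, mul_pos hc δ'.2⟩ (le_of_eq hkey.symm)

lemma ldpUpper_scale {E : Set (Sp d)} {P : Sp d → Measure (Path d)} {T₀ : ℝ}
    {I₀ : Sp d → Sp d → ℝ}
    (hu : LDPUpperCompact E P T₀ (fun q q' => ((I₀ q q' : ℝ) : EReal)))
    {c : ℝ} (hc : 0 < c) :
    LDPUpperCompact E P (c * T₀)
      (fun q q' => ((c * I₀ (c⁻¹ • q) (c⁻¹ • q') : ℝ) : EReal)) := by
  intro q V hV
  set e := mulIso c hc with he
  have hV' : IsCompact ((c⁻¹ : ℝ) • V) := by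
    rw [← Set.image_smul]
    exact hV.image (continuous_const_smul _)
  have h0 := hu (c⁻¹ • q) (c⁻¹ • V) hV'
  have hL : (⨅ q' ∈ V, ((c * I₀ (c⁻¹ • q) (c⁻¹ • q') : ℝ) : EReal))
      = e (⨅ q' ∈ c⁻¹ • V, ((I₀ (c⁻¹ • q) q' : ℝ) : EReal)) := by
    rw [orderIso_biInf,
      ← biInf_smul_set hc V (fun q' => e ((I₀ (c⁻¹ • q) q' : ℝ) : EReal))]
    refine iInf_congr fun q' => iInf_congr fun _ => ?_
    rw [he, mulIso_apply, EReal.coe_mul]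
  have hδ : ∀ δ : ℝ, 0 < δ →
      limsup (fun ε : ℝ => (ε : EReal) * ENNReal.log
        (⨆ z ∈ nearScaled E ε q δ, P z {ω | scaledPath ε ω (c * T₀) ∈ V}))
        (𝓝[>] (0 : ℝ))
      = e (limsup (fun ε : ℝ => (ε : EReal) * ENNReal.log
        (⨆ z ∈ nearScaled E ε (c⁻¹ • q) (δ / c),
          P z {ω | scaledPath ε ω T₀ ∈ c⁻¹ • V})) (𝓝[>] (0 : ℝ))) := by
    intro δ hδpos
    rw [OrderIso.limsup_apply e]
    rw [← limsup_div_comp (fun ε : ℝ => e ((ε : EReal) * ENNReal.log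
      (⨆ z ∈ nearScaled E ε (c⁻¹ • q) (δ / c),
        P z {ω | scaledPath ε ω T₀ ∈ c⁻¹ • V}))) c hc]
    refine Filter.limsup_congr (Filter.Eventually.of_forall fun ε => ?_)
    rw [he, mulIso_apply]
    exact fun_scale_sup E P hc T₀ q δ V ε
  rw [hL, ← mulIso_neg c hc]
  refine le_trans ?_ ((mulIso c hc).monotone h0)
  rw [OrderIso.map_iInf]
  refine le_iInf fun δ' => ?_
  have hkey := hδ (c * δ'.1) (mul_pos hc δ'.2)
  rw [show c * δ'.1 / c = δ'.1 by field_simp] at hkey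
  exact iInf_le_of_le ⟨c * δ'.1, mul_pos hc δ'.2⟩ (le_of_eq hkey)

lemma weakLDP_scale {E : Set (Sp d)} {P : Sp d → Measure (Path d)} {T₀ : ℝ}
    {I₀ : Sp d → Sp d → ℝ} (h : WeakLDP E P T₀ I₀) {c : ℝ} (hc : 0 < c) :
    WeakLDP E P (c * T₀) (fun q q' => c * I₀ (c⁻¹ • q) (c⁻¹ • q')) := by
  obtain ⟨hlsc, hnn, hlow, hupp⟩ := h
  refine ⟨?_, fun q q' => mul_nonneg hc.le (hnn _ _), ldpLower_scale hlow hc,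
    ldpUpper_scale hupp hc⟩
  have hcont : Continuous fun p : Sp d × Sp d =>
      ((c⁻¹ • p.1, c⁻¹ • p.2) : Sp d × Sp d) :=
    ((continuous_const_smul _).comp continuous_fst).prodMk
      ((continuous_const_smul _).comp continuous_snd)
  have h1 : LowerSemicontinuous fun p : Sp d × Sp d =>
      I₀ (c⁻¹ • p.1) (c⁻¹ • p.2) := LowerSemicontinuous.comp hlsc hcont
  exact lsc_const_mul h1 hc

end ScalingAux

/-- If `Z^ε(T₀)` satisfies the weak LDP with rate function `I₀` for
some `T₀ > 0`, then `Z^ε(T)` satisfies the weak LDP for every `T > 0`, with rate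
functions obeying `I_{θT}(θq,θq') = θ I_T(q,q')`. -/
theorem weakLDP_all_T_and_scaling
    {d : ℕ} (M : MarkovSetup d) (T₀ : ℝ) (hT₀ : 0 < T₀) (I₀ : Sp d → Sp d → ℝ)
    (h : WeakLDP M.E M.P T₀ I₀) :
    ∃ I : ℝ → Sp d → Sp d → ℝ, I T₀ = I₀ ∧
      (∀ T : ℝ, 0 < T → WeakLDP M.E M.P T (I T)) ∧
      ∀ θ T : ℝ, 0 < θ → 0 < T → ∀ q q' : Sp d,
        I (θ * T) (θ • q) (θ • q') = θ * I T q q' := by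
  refine ⟨fun T q q' => (T / T₀) * I₀ ((T₀ / T) • q) ((T₀ / T) • q'), ?_, ?_, ?_⟩
  · funext q q'
    simp [div_self hT₀.ne']
  · intro T hT
    have hc : 0 < T / T₀ := div_pos hT hT₀
    have h2 := weakLDP_scale h hc
    have hTt : T / T₀ * T₀ = T := div_mul_cancel₀ T hT₀.ne'
    have hinv : (T / T₀)⁻¹ = T₀ / T := by rw [inv_div]
    rw [hTt] at h2
    simp only [hinv] at h2
    exact h2
  · intro θ T hθ hT q q'
    simp only [smul_smul]
    have e1 : T₀ / (θ * T) * θ = T₀ / T := by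
      field_simp
    have e2 : θ * T / T₀ = θ * (T / T₀) := by ring
    rw [e1, e2, mul_assoc]

end GreenLDP
end
end

section
/- If the family Z^ε(T) = ε Z(T/ε) satisfies the weak large deviation principle in ℝ^d with rate functions I_T for every T > 0, then the rate functions are subadditive along the Markov property: I_{T+T'}(q,q'') ≤ I_T(q,q') + I_{T'}(q',q'') for all T > 0, T' > 0 and q,q',q'' ∈ ℝ^d. -/
open MeasureTheory Filter Set Metric
open scoped ENNReal Topology Pointwise

noncomputable section

namespace GreenLDP

variable {d : ℕ}

/-! ### Auxiliary lemmas for `rate_subadditive` -/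

section AuxSubadd

variable {d : ℕ}

/-- Converting `b < ε * log x` into an exponential bound. -/
lemma coe_lt_coe_mul_log_iff {ε b : ℝ} (hε : 0 < ε) {x : ℝ≥0∞} :
    (b : EReal) < (ε : EReal) * ENNReal.log x ↔
      EReal.exp (((b / ε : ℝ)) : EReal) < x := by
  have h2 : EReal.exp (((b / ε : ℝ)) : EReal) < x ↔
      ((b / ε : ℝ) : EReal) < ENNReal.log x := by
    conv_lhs => rw [← ENNReal.exp_log x]
    exact EReal.exp_lt_exp_iff
  rw [h2]
  induction (ENNReal.log x) using EReal.rec with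
  | bot => simp [EReal.coe_mul_bot_of_pos hε]
  | coe y =>
      rw [← EReal.coe_mul, EReal.coe_lt_coe_iff, EReal.coe_lt_coe_iff,
        div_lt_iff₀ hε, mul_comm]
  | top =>
      simp only [EReal.coe_mul_top_of_pos hε]
      simp [EReal.coe_lt_top]

/-- Nonemptiness of a set from positive measure together with an a.e. property. -/
lemma exists_mem_of_pos_meas {α : Type*} [MeasurableSpace α] {μ : Measure α}
    {S : Set α} {Q : α → Prop} (hQ : ∀ᵐ ω ∂μ, Q ω) (hS : 0 < μ S) :
    ∃ ω ∈ S, Q ω := by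
  by_contra hc
  push_neg at hc
  have hsub : S ⊆ {ω | ¬ Q ω} := fun ω hω => hc ω hω
  have h0 : μ {ω | ¬ Q ω} = 0 := by
    rw [MeasureTheory.ae_iff] at hQ
    exact hQ
  exact absurd (measure_mono_null hsub h0) (by simpa using hS.ne')

/-- From the LDP lower bound, extract a `δ` with an eventual lower bound. -/
lemma exists_delta_lower {E : Set (Sp d)} {P : Sp d → Measure (Path d)} {T : ℝ}
    {J : Sp d → Sp d → ℝ}
    (hL : LDPLower E P T (fun a b => ((J a b : ℝ) : EReal)))
    {q q₀ : Sp d} {O : Set (Sp d)} (hO : IsOpen O) (hq₀ : q₀ ∈ O) {b : ℝ}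
    (hb : b < -(J q q₀)) :
    ∃ δ : ℝ, 0 < δ ∧ ∀ᶠ (ε : ℝ) in 𝓝[>] (0:ℝ),
      ((b : ℝ) : EReal) < ((ε : ℝ) : EReal) * ENNReal.log
        (⨅ z ∈ nearScaled E ε q δ, P z {ω | scaledPath ε ω T ∈ O}) := by
  have h := hL q O hO
  have h1 : (⨅ q' ∈ O, ((J q q' : ℝ) : EReal)) ≤ ((J q q₀ : ℝ) : EReal) :=
    iInf₂_le q₀ hq₀
  have h2 : ((-(J q q₀) : ℝ) : EReal) ≤ -(⨅ q' ∈ O, ((J q q' : ℝ) : EReal)) := by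
    rw [EReal.coe_neg]
    exact EReal.neg_le_neg_iff.mpr h1
  have h3 : ((b : ℝ) : EReal) < ⨆ δ : {δ : ℝ // 0 < δ},
      liminf (fun ε : ℝ =>
        (ε : EReal) * ENNReal.log
          (⨅ z ∈ nearScaled E ε q δ.1, P z {ω | scaledPath ε ω T ∈ O}))
        (𝓝[>] (0 : ℝ)) :=
    lt_of_lt_of_le (lt_of_lt_of_le (EReal.coe_lt_coe_iff.mpr hb) h2) h
  obtain ⟨δ, hδ⟩ := lt_iSup_iff.mp h3
  exact ⟨δ.1, δ.2, eventually_lt_of_lt_liminf hδ⟩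

lemma nearScaled_eq_sep (E : Set (Sp d)) (ε : ℝ) (q : Sp d) (δ : ℝ) :
    nearScaled E ε q δ = {w ∈ E | ε • w ∈ ball q δ} := by
  ext w
  simp [nearScaled, mem_ball, dist_eq_norm]

/-- Approachability: every point `q` is eventually approachable at scale `ρ`. -/
lemma eventually_near_nonempty (M : MarkovSetup d) {J : Sp d → Sp d → ℝ}
    (hL : LDPLower M.E M.P 1 (fun a b => ((J a b : ℝ) : EReal)))
    (q : Sp d) {ρ : ℝ} (hρ : 0 < ρ) :
    ∀ᶠ ε in 𝓝[>] (0:ℝ), (nearScaled M.E ε q ρ).Nonempty := by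
  obtain ⟨z₀, hz₀⟩ : M.E.Nonempty := by
    rcases M.E.eq_empty_or_nonempty with hE | hE
    · exact absurd (hE ▸ Bornology.isBounded_empty) M.unbounded
    · exact hE
  obtain ⟨δ, hδ, hev⟩ := exists_delta_lower hL (q := 0) (q₀ := q)
    isOpen_ball (mem_ball_self hρ) (b := -(J 0 q) - 1) (by linarith)
  have hev2 : ∀ᶠ ε in 𝓝[>] (0:ℝ), ε ∈ Ioo (0:ℝ) (δ / (‖z₀‖ + 1)) :=
    Ioo_mem_nhdsGT_of_mem (by constructor <;> [rfl; positivity])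
  filter_upwards [hev, hev2] with ε hgood hεm
  have hεpos : (0:ℝ) < ε := hεm.1
  have hz₀near : z₀ ∈ nearScaled M.E ε 0 δ := by
    refine ⟨hz₀, ?_⟩
    rw [sub_zero, norm_smul, Real.norm_eq_abs, abs_of_pos hεpos]
    have h1 : ε * (‖z₀‖ + 1) < δ := (lt_div_iff₀ (by positivity)).mp hεm.2
    nlinarith [norm_nonneg z₀]
  rw [coe_lt_coe_mul_log_iff hεpos] at hgood
  have hpos : 0 < M.P z₀ {ω | scaledPath ε ω 1 ∈ ball q ρ} :=
    (zero_le').trans_lt (hgood.trans_le (iInf₂_le z₀ hz₀near))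
  obtain ⟨ω, hωS, hωQ⟩ := exists_mem_of_pos_meas (M.stays z₀ hz₀) hpos
  refine ⟨ω (1 / ε), hωQ (1/ε) (by positivity), ?_⟩
  have hb : scaledPath ε ω 1 ∈ ball q ρ := hωS
  rw [mem_ball, dist_eq_norm] at hb
  exact hb

/-- The Markov chaining inequality. -/
lemma chain_bound (M : MarkovSetup d) {ε T T' : ℝ} (hε : 0 < ε) (hT : 0 ≤ T)
    {z : Sp d} (hz : z ∈ M.E) {Bmid Bend : Set (Sp d)}
    (hBmid : MeasurableSet Bmid) (hBend : MeasurableSet Bend) :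
    (⨅ z' ∈ {w ∈ M.E | ε • w ∈ Bmid}, M.P z' {ω | scaledPath ε ω T' ∈ Bend}) *
        M.P z {ω | scaledPath ε ω T ∈ Bmid} ≤
      M.P z {ω | scaledPath ε ω (T + T') ∈ Bend} := by
  set s : ℝ := T / ε with hs
  set u : ℝ := T' / ε with hu
  have hs0 : 0 ≤ s := div_nonneg hT hε.le
  set m : ℝ≥0∞ :=
    ⨅ z' ∈ {w ∈ M.E | ε • w ∈ Bmid}, M.P z' {ω | scaledPath ε ω T' ∈ Bend} with hm
  have hmeasu : Measurable fun ω' : Path d => ε • ω' u :=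
    (measurable_pi_apply u).const_smul ε
  set G : Set (Path d) := {ω' : Path d | ε • ω' u ∈ Bend} with hG
  have hGm : MeasurableSet G := hmeasu hBend
  set F : Path d → ℝ≥0∞ := G.indicator 1 with hF
  have hFm : Measurable F := measurable_const.indicator hGm
  have hmark := M.markov z hz s hs0 F hFm
  have hmeassu : Measurable fun ω : Path d => ε • ω (s + u) :=
    (measurable_pi_apply (s+u)).const_smul ε
  have hA : MeasurableSet {ω : Path d | ε • ω (s + u) ∈ Bend} := hmeassu hBend
  have hLHS : ∫⁻ ω, F (fun t => ω (s + t)) ∂ M.P z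
      = M.P z {ω : Path d | ε • ω (s + u) ∈ Bend} := by
    rw [← MeasureTheory.lintegral_indicator_one hA]
    refine lintegral_congr fun ω => ?_
    have hmem : ((fun t => ω (s + t)) ∈ G) ↔ ε • ω (s + u) ∈ Bend := Iff.rfl
    by_cases hω : ε • ω (s + u) ∈ Bend
    · rw [hF, Set.indicator_of_mem (hmem.mpr hω),
        Set.indicator_of_mem (show ω ∈ {ω : Path d | ε • ω (s + u) ∈ Bend} from hω)]
      rfl
    · rw [hF, Set.indicator_of_notMem (fun hh => hω (hmem.mp hh)),
        Set.indicator_of_notMem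
          (show ω ∉ {ω : Path d | ε • ω (s + u) ∈ Bend} from hω)]
  set Smid : Set (Path d) := {ω : Path d | ε • ω s ∈ Bmid} with hSmid
  have hSmidm : MeasurableSet Smid := ((measurable_pi_apply s).const_smul ε) hBmid
  have hkey : ∀ᵐ ω ∂ M.P z, Smid.indicator (fun _ => m) ω ≤ M.P (ω s) G := by
    filter_upwards [M.stays z hz] with ω hQ
    by_cases hωS : ω ∈ Smid
    · rw [Set.indicator_of_mem hωS]
      exact iInf₂_le (ω s) ⟨hQ s hs0, hωS⟩
    · simp [Set.indicator_of_notMem hωS]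
  have hcalc : m * M.P z Smid ≤ M.P z {ω : Path d | ε • ω (s + u) ∈ Bend} := by
    calc m * M.P z Smid
        = ∫⁻ ω, Smid.indicator (fun _ => m) ω ∂ M.P z :=
          (lintegral_indicator_const hSmidm m).symm
      _ ≤ ∫⁻ ω, M.P (ω s) G ∂ M.P z := lintegral_mono_ae hkey
      _ = ∫⁻ ω, ∫⁻ ω', F ω' ∂ M.P (ω s) ∂ M.P z :=
          (lintegral_congr fun ω =>
            (MeasureTheory.lintegral_indicator_one hGm).symm)
      _ = ∫⁻ ω, F (fun t => ω (s + t)) ∂ M.P z := hmark.symm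
      _ = M.P z {ω : Path d | ε • ω (s + u) ∈ Bend} := hLHS
  have heq1 : {ω : Path d | scaledPath ε ω T ∈ Bmid} = Smid := rfl
  have heq2 : {ω : Path d | scaledPath ε ω (T + T') ∈ Bend}
      = {ω : Path d | ε • ω (s + u) ∈ Bend} := by
    simp only [scaledPath, hs, hu, add_div]
  rw [heq1, heq2]
  exact hcalc

end AuxSubadd

/-- If `Z^ε(T)` satisfies the weak LDP with rate functions `I_T`
for every `T > 0`, then `I_{T+T'}(q,q'') ≤ I_T(q,q') + I_{T'}(q',q'')`. -/
theorem rate_subadditive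
    {d : ℕ} (M : MarkovSetup d) (I : ℝ → Sp d → Sp d → ℝ)
    (h : ∀ T : ℝ, 0 < T → WeakLDP M.E M.P T (I T)) :
    ∀ T T' : ℝ, 0 < T → 0 < T' → ∀ q q' q'' : Sp d,
      I (T + T') q q'' ≤ I T q q' + I T' q' q'' := by
  intro T T' hT hT' q q' q''
  by_contra hcon
  push_neg at hcon
  have hTT' : 0 < T + T' := by linarith
  obtain ⟨hlsc, hnn, hlow, hupp⟩ := h (T + T') hTT'
  obtain ⟨-, -, hlowT, -⟩ := h T hT
  obtain ⟨-, -, hlowT', -⟩ := h T' hT'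
  obtain ⟨-, -, hlow1, -⟩ := h 1 one_pos
  set A : ℝ := I T q q' with hA
  set B : ℝ := I T' q' q'' with hB
  set γ : ℝ := (I (T + T') q q'' - (A + B)) / 2 with hγ
  have hγpos : 0 < γ := by simp only [hγ]; linarith
  have hls : ∀ᶠ p in 𝓝 (q, q''), (A + B + γ) <
      (fun p : Sp d × Sp d => I (T + T') p.1 p.2) p :=
    hlsc (q, q'') (A + B + γ) (by show A + B + γ < I (T + T') q q''; simp only [hγ]; linarith)
  obtain ⟨r, hr, hball⟩ := Metric.eventually_nhds_iff_ball.mp hls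
  set r' : ℝ := r / 2 with hr'
  have hr'pos : 0 < r' := by positivity
  -- Main estimate via LDP lower bounds for `T`, `T'` and the Markov property,
  -- compared against the LDP upper bound for `T + T'`.
  have key : ∀ η : ℝ, 0 < η →
      (⨅ v ∈ closedBall q'' r', ((I (T + T') q v : ℝ) : EReal))
        ≤ ((A + B + 2 * η : ℝ) : EReal) := by
    intro η hη
    obtain ⟨δ₂, hδ₂, hev₂⟩ := exists_delta_lower hlowT' (q := q') (q₀ := q'')
      isOpen_ball (mem_ball_self hr'pos) (b := -B - η) (by linarith)
    obtain ⟨δ₁, hδ₁, hev₁⟩ := exists_delta_lower hlowT (q := q) (q₀ := q')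
      isOpen_ball (mem_ball_self hδ₂) (b := -A - η) (by linarith)
    have hup := hupp q (closedBall q'' r') (isCompact_closedBall _ _)
    have hc : ∀ δ' : {δ : ℝ // 0 < δ},
        ((-(A + B + 2 * η) : ℝ) : EReal) ≤
          limsup (fun ε : ℝ =>
            (ε : EReal) * ENNReal.log
              (⨆ z ∈ nearScaled M.E ε q δ'.1,
                M.P z {ω | scaledPath ε ω (T + T') ∈ closedBall q'' r'}))
            (𝓝[>] (0 : ℝ)) := by
      intro δ'
      have hδ''pos : 0 < min δ'.1 δ₁ := lt_min δ'.2 hδ₁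
      have hne := eventually_near_nonempty M hlow1 q hδ''pos
      refine le_limsup_of_frequently_le (Filter.Eventually.frequently ?_)
      filter_upwards [hev₁, hev₂, hne, self_mem_nhdsWithin] with ε h₁ h₂ hnem hεmem
      obtain ⟨zw, hzw⟩ := hnem
      have hεpos : (0 : ℝ) < ε := hεmem
      have hzwδ₁ : zw ∈ nearScaled M.E ε q δ₁ :=
        ⟨hzw.1, lt_of_lt_of_le hzw.2 (min_le_right _ _)⟩
      have hzwδ' : zw ∈ nearScaled M.E ε q δ'.1 :=
        ⟨hzw.1, lt_of_lt_of_le hzw.2 (min_le_left _ _)⟩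
      rw [coe_lt_coe_mul_log_iff hεpos] at h₁ h₂
      have hp : EReal.exp (((-A - η) / ε : ℝ) : EReal)
          < M.P zw {ω | scaledPath ε ω T ∈ ball q' δ₂} :=
        h₁.trans_le (iInf₂_le zw hzwδ₁)
      have hchain := chain_bound M (T' := T') hεpos hT.le hzw.1
        (Bmid := ball q' δ₂) (Bend := ball q'' r')
        measurableSet_ball measurableSet_ball
      rw [← nearScaled_eq_sep] at hchain
      have hmul : EReal.exp (((-B - η) / ε : ℝ) : EReal) *
            EReal.exp (((-A - η) / ε : ℝ) : EReal)
          < (⨅ z' ∈ nearScaled M.E ε q' δ₂,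
              M.P z' {ω | scaledPath ε ω T' ∈ ball q'' r'}) *
            M.P zw {ω | scaledPath ε ω T ∈ ball q' δ₂} :=
        ENNReal.mul_lt_mul h₂ hp
      have hexp : EReal.exp (((-(A + B + 2 * η)) / ε : ℝ) : EReal)
          = EReal.exp (((-B - η) / ε : ℝ) : EReal) *
            EReal.exp (((-A - η) / ε : ℝ) : EReal) := by
        rw [← EReal.exp_add, ← EReal.coe_add]
        congr 2
        ring
      refine le_of_lt ?_
      rw [coe_lt_coe_mul_log_iff hεpos]
      calc EReal.exp (((-(A + B + 2 * η)) / ε : ℝ) : EReal)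
          < (⨅ z' ∈ nearScaled M.E ε q' δ₂,
              M.P z' {ω | scaledPath ε ω T' ∈ ball q'' r'}) *
            M.P zw {ω | scaledPath ε ω T ∈ ball q' δ₂} := by rw [hexp]; exact hmul
        _ ≤ M.P zw {ω | scaledPath ε ω (T + T') ∈ ball q'' r'} := hchain
        _ ≤ M.P zw {ω | scaledPath ε ω (T + T') ∈ closedBall q'' r'} :=
            measure_mono fun ω hω => ball_subset_closedBall hω
        _ ≤ ⨆ z ∈ nearScaled M.E ε q δ'.1,
              M.P z {ω | scaledPath ε ω (T + T') ∈ closedBall q'' r'} :=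
            le_iSup₂ (f := fun z _ => M.P z {ω | scaledPath ε ω (T + T') ∈ closedBall q'' r'}) zw hzwδ'
    have hineq := le_trans (le_iInf hc) hup
    rw [show ((-(A + B + 2 * η) : ℝ) : EReal)
        = -((A + B + 2 * η : ℝ) : EReal) from rfl] at hineq
    exact EReal.neg_le_neg_iff.mp hineq
  -- `η → 0` : the infimum over the closed ball is at most `A + B`.
  have hmain : (⨅ v ∈ closedBall q'' r', ((I (T + T') q v : ℝ) : EReal))
      ≤ ((A + B : ℝ) : EReal) := by
    by_contra hlt
    push_neg at hlt
    obtain ⟨y, hy1, hy2⟩ := EReal.exists_between_coe_real hlt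
    have hη : (0 : ℝ) < (y - (A + B)) / 2 := by
      rw [EReal.coe_lt_coe_iff] at hy1
      linarith
    have hk := lt_of_lt_of_le hy2 (key _ hη)
    rw [EReal.coe_lt_coe_iff] at hk hy1
    linarith
  have hge : ((A + B + γ : ℝ) : EReal)
      ≤ ⨅ v ∈ closedBall q'' r', ((I (T + T') q v : ℝ) : EReal) := by
    refine le_iInf₂ fun v hv => EReal.coe_le_coe_iff.mpr (le_of_lt ?_)
    refine hball (q, v) ?_
    have hvd : dist v q'' ≤ r' := mem_closedBall.mp hv
    rw [mem_ball, Prod.dist_eq, dist_self]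
    rw [max_lt_iff]
    constructor
    · exact hr
    · simp only [hr'] at hvd; linarith
  have hfin := hge.trans hmain
  rw [EReal.coe_le_coe_iff] at hfin
  linarith

end GreenLDP
end
end
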